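/- arXiv:2107.04349 — 7 statements merged into one kernel-verified Lean document; each statement's English description precedes it below -/
import Mathlib

section
/- Let k ∈ {1,…,n−1} and suppose o ∈ ℝⁿ minimizes ‖Ax − b‖² over all x ∈ ℝⁿ with card(x) ≤ k. Assume õ_k > √g_k and that the residual ε = Ao − b satisfies ‖A‖·‖ε‖ ≤ min{√g_{k+1}, õ_k}. Then o is a stationary point of the relaxation R_g(·) + ‖A·−b‖², i.e. 2z is a subgradient of f** at o, where z = (I − AᵀA)o + Aᵀb. -/
open scoped RealInnerProductSpace ENNReal
noncomputable section

/-- `ℝⁿ` with the Euclidean inner product and norm. -/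
abbrev Evec (n : ℕ) := EuclideanSpace ℝ (Fin n)

/-- The number of nonzero entries of a vector. -/
def spcard {n : ℕ} (x : Evec n) : ℕ := (Finset.univ.filter (fun i => x i ≠ 0)).card

/-- The absolute values of the entries of `x` sorted in nonincreasing order,
as a `1`-based function on `ℕ` (with value `0` outside `{1,…,n}`, so the
convention `x̃_{n+1} = 0` is built in). -/
def sortedAbs {n : ℕ} (x : Evec n) : ℕ → ℝ :=
  fun j => if h : 1 ≤ j ∧ j ≤ n then
    |x ((Tuple.sort (fun i : Fin n => -|x i|)) ⟨j - 1, by omega⟩)| else 0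

/-- `G(k) = ∑_{i=1}^k g_i`. -/
def Gsum (g : ℕ → ℝ≥0∞) (k : ℕ) : ℝ≥0∞ := ∑ i ∈ Finset.Icc 1 k, g i

/-- `f(x) = G(card x) + ‖x‖²`, valued in `EReal`. -/
def fobj {n : ℕ} (g : ℕ → ℝ≥0∞) (x : Evec n) : EReal :=
  ((Gsum g (spcard x) : ℝ≥0∞) : EReal) + ((‖x‖ ^ 2 : ℝ) : EReal)

/-- The convex conjugate `f*` of `f`. -/
def fconj {n : ℕ} (g : ℕ → ℝ≥0∞) (y : Evec n) : EReal :=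
  ⨆ x : Evec n, ((⟪x, y⟫ : ℝ) : EReal) - fobj g x

/-- The biconjugate (convex envelope) `f**` of `f`. -/
def fbiconj {n : ℕ} (g : ℕ → ℝ≥0∞) (x : Evec n) : EReal :=
  ⨆ y : Evec n, ((⟪x, y⟫ : ℝ) : EReal) - fconj g y

/-- `v` is a subgradient of `f**` at `x`. -/
def IsSubgrad {n : ℕ} (g : ℕ → ℝ≥0∞) (v x : Evec n) : Prop :=
  ∀ w : Evec n, fbiconj g x + ((⟪v, w - x⟫ : ℝ) : EReal) ≤ fbiconj g w

/-- `z = (I − AᵀA)x + Aᵀb`. -/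
def zvec {n m : ℕ} (A : Evec n →L[ℝ] Evec m) (b : Evec m) (x : Evec n) : Evec n :=
  x - ContinuousLinearMap.adjoint A (A x) + ContinuousLinearMap.adjoint A b

/-- `x` is a stationary point of the relaxation `R_g(·) + ‖A·−b‖²`:
`2z` is a subgradient of `f**` at `x`, where `z = (I − AᵀA)x + Aᵀb`. -/
def IsStationaryPt {n m : ℕ} (g : ℕ → ℝ≥0∞) (A : Evec n →L[ℝ] Evec m) (b : Evec m)
    (x : Evec n) : Prop :=
  IsSubgrad g ((2 : ℝ) • zvec A b x) x

/-- `A` satisfies the RIP of order `r` with constant `δ`. -/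
def RIP {n m : ℕ} (A : Evec n →L[ℝ] Evec m) (r : ℕ) (δ : ℝ) : Prop :=
  ∀ w : Evec n, spcard w ≤ r →
    (1 - δ) * ‖w‖ ^ 2 ≤ ‖A w‖ ^ 2 ∧ ‖A w‖ ^ 2 ≤ (1 + δ) * ‖w‖ ^ 2

/-- Square root on `[0,∞]`, with `√(+∞) = +∞`. -/
def sqrtE (a : ℝ≥0∞) : ℝ≥0∞ := a ^ (1 / 2 : ℝ)

/-- The relaxed objective `R_g(x) + ‖Ax − b‖²`, where `R_g(x) = f**(x) − ‖x‖²`. -/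
def relaxObj {n m : ℕ} (g : ℕ → ℝ≥0∞) (A : Evec n →L[ℝ] Evec m) (b : Evec m)
    (x : Evec n) : EReal :=
  (fbiconj g x - ((‖x‖ ^ 2 : ℝ) : EReal)) + ((‖A x - b‖ ^ 2 : ℝ) : EReal)

/-- The original (unrelaxed) objective `G(card(x)) + ‖Ax − b‖²`. -/
def origObj {n m : ℕ} (g : ℕ → ℝ≥0∞) (A : Evec n →L[ℝ] Evec m) (b : Evec m)
    (x : Evec n) : EReal :=
  ((Gsum g (spcard x) : ℝ≥0∞) : EReal) + ((‖A x - b‖ ^ 2 : ℝ) : EReal)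

/-- `x` is a local minimizer of `F`. -/
def IsLocalMinimizer {n : ℕ} (F : Evec n → EReal) (x : Evec n) : Prop :=
  ∃ U ∈ nhds x, ∀ w ∈ U, F x ≤ F w

section Helpers

lemma sortedAbs_anti {n : ℕ} (x : Evec n) (p q : Fin n) (h : p ≤ q) :
    |x ((Tuple.sort (fun i : Fin n => -|x i|)) q)| ≤
      |x ((Tuple.sort (fun i : Fin n => -|x i|)) p)| := by
  have := Tuple.monotone_sort (fun i : Fin n => -|x i|) h
  simpa using this

lemma sortedAbs_eq {n : ℕ} (x : Evec n) (k : ℕ) (hk1 : 1 ≤ k) (hkn : k ≤ n) :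
    sortedAbs x k = |x ((Tuple.sort (fun i : Fin n => -|x i|)) ⟨k - 1, by omega⟩)| := by
  rw [sortedAbs, dif_pos ⟨hk1, hkn⟩]

lemma le_spcard_of_sortedAbs_pos {n : ℕ} (x : Evec n) (k : ℕ) (hk1 : 1 ≤ k) (hkn : k ≤ n)
    (hpos : 0 < sortedAbs x k) : k ≤ spcard x := by
  set σ := Tuple.sort (fun i : Fin n => -|x i|) with hσ
  rw [sortedAbs_eq x k hk1 hkn] at hpos
  have hsub : ∀ p ∈ Finset.Iic (⟨k - 1, by omega⟩ : Fin n),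
      σ p ∈ Finset.univ.filter (fun i => x i ≠ 0) := by
    intro p hp
    simp only [Finset.mem_Iic] at hp
    have := sortedAbs_anti x p ⟨k - 1, by omega⟩ hp
    rw [← hσ] at this
    have : 0 < |x (σ p)| := lt_of_lt_of_le hpos this
    simp only [Finset.mem_filter, Finset.mem_univ, true_and]
    intro h0; rw [h0] at this; simp at this
  have hinj : Set.InjOn σ (Finset.Iic (⟨k - 1, by omega⟩ : Fin n)) :=
    Set.injOn_of_injective σ.injective
  have := Finset.card_le_card_of_injOn σ hsub hinj
  rw [Fin.card_Iic] at this
  unfold spcard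
  simp only [Fin.val_mk] at this
  omega

lemma sortedAbs_le_abs {n : ℕ} (x : Evec n) (k : ℕ) (hk1 : 1 ≤ k) (hkn : k ≤ n)
    (hcard : spcard x ≤ k) (i : Fin n) (hi : x i ≠ 0) :
    sortedAbs x k ≤ |x i| := by
  set σ := Tuple.sort (fun i : Fin n => -|x i|) with hσ
  rw [sortedAbs_eq x k hk1 hkn]
  set j := σ.symm i with hj
  have hij : σ j = i := Equiv.apply_symm_apply σ i
  by_cases hjk : (j : ℕ) < k
  · have h := sortedAbs_anti x j ⟨k - 1, by omega⟩ (by simp [Fin.le_def]; omega)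
    rw [← hσ, hij] at h
    exact h
  · exfalso
    have hsub : ∀ p ∈ Finset.Iic j, σ p ∈ Finset.univ.filter (fun i => x i ≠ 0) := by
      intro p hp
      simp only [Finset.mem_Iic] at hp
      have h := sortedAbs_anti x p j hp
      rw [← hσ, hij] at h
      have hpos : 0 < |x (σ p)| := lt_of_lt_of_le (abs_pos.mpr hi) h
      simp only [Finset.mem_filter, Finset.mem_univ, true_and]
      intro h0; rw [h0] at hpos; simp at hpos
    have := Finset.card_le_card_of_injOn σ hsub (Set.injOn_of_injective σ.injective)
    rw [Fin.card_Iic] at this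
    unfold spcard at hcard
    omega

lemma core_ineq {n : ℕ} (z : Fin n → ℝ) (S T : Finset (Fin n)) (t ρ Gk Gj : ℝ)
    (hρ0 : 0 ≤ ρ) (hρt : ρ ≤ t)
    (hS : ∀ i ∈ S, t ^ 2 ≤ z i ^ 2) (hSc : ∀ i ∉ S, z i ^ 2 ≤ ρ ^ 2)
    (hle : T.card ≤ S.card → Gk - Gj ≤ (S.card - T.card : ℝ) * t ^ 2)
    (hge : S.card ≤ T.card → ((T.card : ℝ) - S.card) * ρ ^ 2 ≤ Gj - Gk) :
    ∑ i ∈ Sᶜ, z i ^ 2 + Gk ≤ ∑ i ∈ Tᶜ, z i ^ 2 + Gj := by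
  classical
  set a := (S ∩ T).card with ha
  have haS : a ≤ S.card := Finset.card_le_card Finset.inter_subset_left
  have haT : a ≤ T.card := Finset.card_le_card Finset.inter_subset_right
  have hdiff : ∑ i ∈ Tᶜ, z i ^ 2 - ∑ i ∈ Sᶜ, z i ^ 2
      = ∑ i ∈ S \ T, z i ^ 2 - ∑ i ∈ T \ S, z i ^ 2 := by
    have h1 : ∑ i ∈ Tᶜ, z i ^ 2 + ∑ i ∈ T, z i ^ 2 = ∑ i, z i ^ 2 := by
      rw [add_comm]; exact Finset.sum_add_sum_compl T _
    have h2 : ∑ i ∈ Sᶜ, z i ^ 2 + ∑ i ∈ S, z i ^ 2 = ∑ i, z i ^ 2 := by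
      rw [add_comm]; exact Finset.sum_add_sum_compl S _
    have h3 : ∑ i ∈ S ∩ T, z i ^ 2 + ∑ i ∈ S \ T, z i ^ 2 = ∑ i ∈ S, z i ^ 2 :=
      Finset.sum_inter_add_sum_sdiff S T _
    have h4 : ∑ i ∈ T ∩ S, z i ^ 2 + ∑ i ∈ T \ S, z i ^ 2 = ∑ i ∈ T, z i ^ 2 :=
      Finset.sum_inter_add_sum_sdiff T S _
    rw [Finset.inter_comm] at h4
    linarith
  have hc1 : (S \ T).card + a = S.card := Finset.card_sdiff_add_card_inter S T
  have hc2 : (T \ S).card + a = T.card := by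
    have := Finset.card_sdiff_add_card_inter T S
    rwa [Finset.inter_comm] at this
  have hb1 : ((S \ T).card : ℝ) * t ^ 2 ≤ ∑ i ∈ S \ T, z i ^ 2 := by
    have := Finset.card_nsmul_le_sum (S \ T) (fun i => z i ^ 2) (t ^ 2)
      (fun i hi => hS i (Finset.mem_sdiff.mp hi).1)
    simpa [nsmul_eq_mul] using this
  have hb2 : ∑ i ∈ T \ S, z i ^ 2 ≤ ((T \ S).card : ℝ) * ρ ^ 2 := by
    have := Finset.sum_le_card_nsmul (T \ S) (fun i => z i ^ 2) (ρ ^ 2)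
      (fun i hi => hSc i (Finset.mem_sdiff.mp hi).2)
    simpa [nsmul_eq_mul] using this
  have ht0 : (0:ℝ) ≤ t := le_trans hρ0 hρt
  rcases le_total T.card S.card with hjk | hjk
  · have h := hle hjk
    have e1 : ((S \ T).card : ℝ) = S.card - a := by
      have : ((S \ T).card + a : ℝ) = S.card := by exact_mod_cast congrArg (Nat.cast (R:=ℝ)) hc1
      linarith
    have e2 : ((T \ S).card : ℝ) = T.card - a := by
      have : ((T \ S).card + a : ℝ) = T.card := by exact_mod_cast congrArg (Nat.cast (R:=ℝ)) hc2
      linarith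
    have hak : (a:ℝ) ≤ T.card := by exact_mod_cast haT
    have hjk' : (T.card : ℝ) ≤ S.card := by exact_mod_cast hjk
    have key : (0:ℝ) ≤ ((T.card:ℝ) - a) * (t ^ 2 - ρ ^ 2) :=
      mul_nonneg (by linarith) (by nlinarith)
    nlinarith []
  · have h := hge hjk
    have e1 : ((S \ T).card : ℝ) = S.card - a := by
      have : ((S \ T).card + a : ℝ) = S.card := by exact_mod_cast congrArg (Nat.cast (R:=ℝ)) hc1
      linarith
    have e2 : ((T \ S).card : ℝ) = T.card - a := by
      have : ((T \ S).card + a : ℝ) = T.card := by exact_mod_cast congrArg (Nat.cast (R:=ℝ)) hc2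
      linarith
    have hak : (a:ℝ) ≤ S.card := by exact_mod_cast haS
    have hjk' : (S.card : ℝ) ≤ T.card := by exact_mod_cast hjk
    have key : (0:ℝ) ≤ ((S.card:ℝ) - a) * (t ^ 2 - ρ ^ 2) :=
      mul_nonneg (by linarith) (by nlinarith)
    nlinarith []

lemma ennreal_coe_ereal_eq (a : ℝ≥0∞) (ha : a ≠ ⊤) :
    (a : EReal) = ((a.toReal : ℝ) : EReal) := by
  conv_lhs => rw [← ENNReal.ofReal_toReal ha]
  rw [EReal.coe_ennreal_ofReal, max_eq_left ENNReal.toReal_nonneg]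

lemma fobj_eq_coe {n : ℕ} (g : ℕ → ℝ≥0∞) (x : Evec n) (hx : Gsum g (spcard x) ≠ ⊤) :
    fobj g x = (((Gsum g (spcard x)).toReal + ‖x‖ ^ 2 : ℝ) : EReal) := by
  rw [fobj, ennreal_coe_ereal_eq _ hx, ← EReal.coe_add]

lemma fbiconj_le_coe {n : ℕ} (g : ℕ → ℝ≥0∞) (x : Evec n) (r : ℝ)
    (hr : fobj g x = (r : EReal)) : fbiconj g x ≤ (r : EReal) := by
  refine iSup_le fun y => ?_
  have hy : ((⟪x, y⟫ - r : ℝ) : EReal) ≤ fconj g y := by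
    have h := le_iSup (fun x' : Evec n => ((⟪x', y⟫ : ℝ) : EReal) - fobj g x') x
    rw [hr] at h
    rwa [EReal.coe_sub]
  have := EReal.sub_le_sub (le_refl (((⟪x, y⟫ : ℝ) : EReal))) hy
  refine le_trans this ?_
  rw [← EReal.coe_sub]
  norm_cast
  simp

lemma isSubgrad_of_fenchel {n : ℕ} (g : ℕ → ℝ≥0∞) (v o : Evec n) (r : ℝ)
    (hfo : fobj g o = (r : EReal))
    (hconj : fconj g v ≤ ((⟪o, v⟫ - r : ℝ) : EReal)) :
    IsSubgrad g v o := by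
  intro w
  have h1 : fbiconj g o ≤ (r : EReal) := fbiconj_le_coe g o r hfo
  have h2 : ((⟪w, v⟫ - (⟪o, v⟫ - r) : ℝ) : EReal) ≤ fbiconj g w := by
    have hle := le_iSup (fun y : Evec n => ((⟪w, y⟫ : ℝ) : EReal) - fconj g y) v
    refine le_trans ?_ hle
    rw [EReal.coe_sub]
    exact EReal.sub_le_sub (le_refl _) hconj
  calc fbiconj g o + ((⟪v, w - o⟫ : ℝ) : EReal)
      ≤ (r : EReal) + ((⟪v, w - o⟫ : ℝ) : EReal) := add_le_add_left h1 _
    _ = ((r + ⟪v, w - o⟫ : ℝ) : EReal) := (EReal.coe_add _ _).symm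
    _ = ((⟪w, v⟫ - (⟪o, v⟫ - r) : ℝ) : EReal) := by
        congr 1
        simp only [inner_sub_right]
        rw [real_inner_comm v w, real_inner_comm v o]
        ring
    _ ≤ fbiconj g w := h2

lemma fconj_le {n : ℕ} (g : ℕ → ℝ≥0∞) (v : Evec n) (c : ℝ)
    (h : ∀ x : Evec n, Gsum g (spcard x) ≠ ⊤ →
      ⟪x, v⟫ - ((Gsum g (spcard x)).toReal + ‖x‖ ^ 2) ≤ c) :
    fconj g v ≤ (c : EReal) := by
  refine iSup_le fun x => ?_
  by_cases hx : Gsum g (spcard x) = ⊤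
  · have : fobj g x = ⊤ := by
      rw [fobj, hx, EReal.coe_ennreal_top, EReal.top_add_coe]
    rw [this]
    rw [sub_eq_add_neg, EReal.neg_top, EReal.add_bot]
    exact bot_le
  · rw [fobj_eq_coe g x hx, ← EReal.coe_sub]
    exact_mod_cast h x hx

lemma norm_sq_eq {n : ℕ} (y : Evec n) : ‖y‖ ^ 2 = ∑ l, y l ^ 2 := by
  rw [EuclideanSpace.norm_eq, Real.sq_sqrt (by positivity)]
  simp [sq_abs]

lemma inner_eq {n : ℕ} (x y : Evec n) : ⟪x, y⟫ = ∑ l, x l * y l := by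
  simp [PiLp.inner_apply, RCLike.inner_apply, conj_trivial, mul_comm]

lemma sq_apply_le_normsq {n : ℕ} (y : Evec n) (i : Fin n) : y i ^ 2 ≤ ‖y‖ ^ 2 := by
  rw [norm_sq_eq]
  exact Finset.single_le_sum (fun l _ => sq_nonneg (y l)) (Finset.mem_univ i)

lemma grad_zero {n m : ℕ} (A : Evec n →L[ℝ] Evec m) (b : Evec m) (k : ℕ) (o : Evec n)
    (hocard : spcard o ≤ k)
    (hmin : ∀ x : Evec n, spcard x ≤ k → ‖A o - b‖ ^ 2 ≤ ‖A x - b‖ ^ 2)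
    (i : Fin n) (hi : o i ≠ 0) :
    (ContinuousLinearMap.adjoint A (A o - b)) i = 0 := by
  set ε := A o - b with hε
  set w := A (EuclideanSpace.single i (1:ℝ)) with hw
  set c := ⟪ε, w⟫ with hc
  set d := ‖w‖ ^ 2 with hd
  have key : ∀ t : ℝ, 0 ≤ 2 * (t * c) + t ^ 2 * d := by
    intro t
    have hcard : spcard (o + t • EuclideanSpace.single i (1:ℝ)) ≤ k := by
      refine le_trans (Finset.card_le_card ?_) hocard
      intro l hl
      simp only [Finset.mem_filter, Finset.mem_univ, true_and] at hl ⊢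
      by_cases hli : l = i
      · subst hli; exact hi
      · intro h0
        apply hl
        simp [PiLp.add_apply, PiLp.smul_apply, EuclideanSpace.single_apply, hli, h0]
    have hm := hmin _ hcard
    have hexp : A (o + t • EuclideanSpace.single i (1:ℝ)) - b = ε + t • w := by
      simp only [map_add, map_smul]
      rw [hε, hw]
      abel
    rw [hexp, norm_add_sq_real, real_inner_smul_right, norm_smul] at hm
    simp only [Real.norm_eq_abs, mul_pow, sq_abs] at hm
    rw [← hc, ← hd] at hm
    linarith
  have hd0 : 0 ≤ d := by rw [hd]; positivity
  have hkey := key (-c / (d + 1))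
  have hne : d + 1 ≠ 0 := by linarith
  have hc0 : c = 0 := by
    have h3 := mul_le_mul_of_nonneg_left hkey (sq_nonneg (d + 1))
    have h4 : (d+1)^2 * (2 * ((-c/(d+1)) * c) + (-c/(d+1))^2 * d) = -c^2 * (d+2) := by
      field_simp
      ring
    rw [h4, mul_zero] at h3
    have hsq : c ^ 2 = 0 := le_antisymm (by nlinarith) (sq_nonneg c)
    exact pow_eq_zero_iff two_ne_zero |>.mp hsq
  have hfin : (ContinuousLinearMap.adjoint A ε) i = c := by
    rw [hc, hw, ← ContinuousLinearMap.adjoint_inner_left]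
    rw [real_inner_comm]
    simp [EuclideanSpace.inner_single_left]
  rw [hfin, hc0]

lemma sqrtE_mul_self (a : ℝ≥0∞) : sqrtE a * sqrtE a = a := by
  rw [sqrtE, ← sq, ← ENNReal.rpow_natCast (a ^ (1/2 : ℝ)) 2, ← ENNReal.rpow_mul]
  norm_num

end Helpers


/-- If `o` minimizes `‖Ax − b‖²` over `card(x) ≤ k` (`1 ≤ k ≤ n−1`),
`õ_k > √g_k`, and `‖A‖‖ε‖ ≤ min{√g_{k+1}, õ_k}` for the residual `ε = Ao − b`,
then `o` is a stationary point of the relaxation `R_g(·) + ‖A·−b‖²`. -/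
theorem fixed_cardinality_solution_is_stationary
    {n m : ℕ} (g : ℕ → ℝ≥0∞) (hg0 : g 0 = 0) (hgmono : Monotone g)
    (A : Evec n →L[ℝ] Evec m) (b : Evec m)
    (k : ℕ) (hk1 : 1 ≤ k) (hk2 : k < n)
    (o : Evec n) (hocard : spcard o ≤ k)
    (hmin : ∀ x : Evec n, spcard x ≤ k → ‖A o - b‖ ^ 2 ≤ ‖A x - b‖ ^ 2)
    (hok : sqrtE (g k) < ENNReal.ofReal (sortedAbs o k))
    (hnoise : ENNReal.ofReal (‖A‖ * ‖A o - b‖) ≤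
      min (sqrtE (g (k + 1))) (ENNReal.ofReal (sortedAbs o k))) :
    IsStationaryPt g A b o := by
  classical
  set ε := A o - b with hε
  set ρ := ‖A‖ * ‖ε‖ with hρ
  set t := sortedAbs o k with ht
  have hρ0 : 0 ≤ ρ := mul_nonneg (norm_nonneg _) (norm_nonneg _)
  have ht0 : 0 < t := by
    have h : (0 : ℝ≥0∞) < ENNReal.ofReal t := lt_of_le_of_lt zero_le hok
    exact ENNReal.ofReal_pos.mp h
  have hρt : ρ ≤ t := by
    have h := le_trans hnoise (min_le_right _ _)
    exact (ENNReal.ofReal_le_ofReal_iff ht0.le).mp h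
  have hgk_le_ofReal : g k ≤ ENNReal.ofReal (t ^ 2) := by
    have h := hok.le
    have h2 := mul_le_mul' h h
    rw [sqrtE_mul_self] at h2
    rwa [← ENNReal.ofReal_mul ht0.le, ← sq] at h2
  have hgk_ne : g k ≠ ⊤ := ne_top_of_le_ne_top ENNReal.ofReal_ne_top hgk_le_ofReal
  have hgk_le : (g k).toReal ≤ t ^ 2 :=
    ENNReal.toReal_le_of_le_ofReal (by positivity) hgk_le_ofReal
  have hρ_sq : ENNReal.ofReal (ρ ^ 2) ≤ g (k + 1) := by
    have h := le_trans hnoise (min_le_left _ _)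
    have h2 := mul_le_mul' h h
    rw [sqrtE_mul_self] at h2
    rwa [← ENNReal.ofReal_mul hρ0, ← sq] at h2
  have hocardk : spcard o = k :=
    le_antisymm hocard (le_spcard_of_sortedAbs_pos o k hk1 hk2.le ht0)
  set S := Finset.univ.filter (fun i => o i ≠ 0) with hSdef
  have hScard : S.card = k := hocardk
  have hAdj : ∀ i, o i ≠ 0 → (ContinuousLinearMap.adjoint A ε) i = 0 := fun i hi =>
    grad_zero A b k o hocard hmin i hi
  set z := zvec A b o with hzdef
  have hzv : z = o - ContinuousLinearMap.adjoint A ε := by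
    rw [hzdef, zvec, hε, map_sub]
    abel
  have hzi : ∀ i, z i = o i - (ContinuousLinearMap.adjoint A ε) i := by
    intro i
    rw [hzv]
    simp [PiLp.sub_apply]
  have hzS : ∀ i ∈ S, z i = o i := by
    intro i hi
    simp only [hSdef, Finset.mem_filter, Finset.mem_univ, true_and] at hi
    rw [hzi, hAdj i hi, sub_zero]
  have hAeps : ‖ContinuousLinearMap.adjoint A ε‖ ≤ ρ := by
    calc ‖ContinuousLinearMap.adjoint A ε‖ ≤ ‖ContinuousLinearMap.adjoint A‖ * ‖ε‖ :=
        ContinuousLinearMap.le_opNorm _ _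
      _ = ρ := by rw [hρ, LinearIsometryEquiv.norm_map ContinuousLinearMap.adjoint A]
  have hzSc : ∀ i ∉ S, z i ^ 2 ≤ ρ ^ 2 := by
    intro i hi
    simp only [hSdef, Finset.mem_filter, Finset.mem_univ, true_and, not_not] at hi
    rw [hzi, hi, zero_sub, neg_sq]
    calc ((ContinuousLinearMap.adjoint A ε) i) ^ 2
        ≤ ‖ContinuousLinearMap.adjoint A ε‖ ^ 2 := sq_apply_le_normsq _ i
      _ ≤ ρ ^ 2 := pow_le_pow_left₀ (norm_nonneg _) hAeps 2
  have htS : ∀ i ∈ S, t ^ 2 ≤ z i ^ 2 := by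
    intro i hi
    have hio : o i ≠ 0 := by
      simpa only [hSdef, Finset.mem_filter, Finset.mem_univ, true_and] using hi
    have habs := sortedAbs_le_abs o k hk1 hk2.le hocard i hio
    rw [hzS i hi]
    calc t ^ 2 ≤ |o i| ^ 2 := pow_le_pow_left₀ ht0.le habs 2
      _ = o i ^ 2 := sq_abs _
  have hGfin : ∀ x : ℕ, Gsum g x ≠ ⊤ → ∀ i ∈ Finset.Icc 1 x, g i ≠ ⊤ := by
    intro x hx i hi hcon
    apply hx
    have hle := Finset.single_le_sum (f := g) (fun _ _ => zero_le) hi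
    rw [hcon] at hle
    exact eq_top_iff.mpr (le_trans hle (le_refl _))
  have hGk_ne : Gsum g k ≠ ⊤ := by
    rw [Gsum]
    refine (ENNReal.sum_lt_top.mpr ?_).ne
    intro i hi
    exact lt_of_le_of_lt (hgmono (Finset.mem_Icc.mp hi).2) hgk_ne.lt_top
  have hsplit : ∀ x y : ℕ, x ≤ y → Gsum g x + ∑ i ∈ Finset.Ioc x y, g i = Gsum g y := by
    intro x y hxy
    rw [Gsum, Gsum]
    have h1 : Finset.Icc 1 x = Finset.Ioc 0 x := by rw [← Finset.Icc_add_one_left_eq_Ioc]; rfl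
    have h2 : Finset.Icc 1 y = Finset.Ioc 0 y := by rw [← Finset.Icc_add_one_left_eq_Ioc]; rfl
    rw [h1, h2]
    exact Finset.sum_Ioc_consecutive g (Nat.zero_le x) hxy
  set r : ℝ := (Gsum g k).toReal + ‖o‖ ^ 2 with hr
  have hfo : fobj g o = (r : EReal) := by
    have h := fobj_eq_coe g o (by rw [hocardk]; exact hGk_ne)
    rw [h, hr, hocardk]
  show IsSubgrad g ((2 : ℝ) • zvec A b o) o
  rw [← hzdef]
  refine isSubgrad_of_fenchel g ((2:ℝ) • z) o r hfo (fconj_le g ((2:ℝ) • z) _ ?_)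
  intro u hu
  set T := Finset.univ.filter (fun i => u i ≠ 0) with hTdef
  set j := spcard u with hj
  have hTcard : T.card = j := rfl
  have hcore : ∑ i ∈ Sᶜ, z i ^ 2 + (Gsum g k).toReal
      ≤ ∑ i ∈ Tᶜ, z i ^ 2 + (Gsum g j).toReal := by
    refine core_ineq (fun i => z i) S T t ρ _ _ hρ0 hρt htS hzSc ?_ ?_
    · intro hjk
      rw [hScard, hTcard] at hjk ⊢
      have heq := hsplit j k hjk
      have hIoc_ne : ∀ i ∈ Finset.Ioc j k, g i ≠ ⊤ := fun i hi =>
        ne_top_of_le_ne_top hgk_ne (hgmono (Finset.mem_Ioc.mp hi).2)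
      have hsum_ne : ∑ i ∈ Finset.Ioc j k, g i ≠ ⊤ := by
        refine (ENNReal.sum_lt_top.mpr ?_).ne
        intro i hi
        exact (hIoc_ne i hi).lt_top
      have hGkeq : (Gsum g k).toReal
          = (Gsum g j).toReal + ∑ i ∈ Finset.Ioc j k, (g i).toReal := by
        rw [← heq, ENNReal.toReal_add hu hsum_ne, ENNReal.toReal_sum hIoc_ne]
      have hbound : ∑ i ∈ Finset.Ioc j k, (g i).toReal ≤ ((k - j : ℕ) : ℝ) * t ^ 2 := by
        have h1 := Finset.sum_le_card_nsmul (Finset.Ioc j k) (fun i => (g i).toReal)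
          ((g k).toReal)
          (fun i hi => ENNReal.toReal_mono hgk_ne (hgmono (Finset.mem_Ioc.mp hi).2))
        rw [Nat.card_Ioc, nsmul_eq_mul] at h1
        refine le_trans h1 ?_
        exact mul_le_mul_of_nonneg_left hgk_le (Nat.cast_nonneg _)
      have hcast : ((k - j : ℕ) : ℝ) = (k : ℝ) - (j : ℝ) := by
        rw [Nat.cast_sub hjk]
      rw [hcast] at hbound
      linarith
    · intro hjk
      rw [hScard, hTcard] at hjk ⊢
      rcases eq_or_lt_of_le hjk with heq | hlt
      · rw [← heq]
        simp
      · have hk1j : k + 1 ≤ j := hlt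
        have hIocj_ne : ∀ i ∈ Finset.Ioc k j, g i ≠ ⊤ := by
          intro i hi
          have hmem : i ∈ Finset.Icc 1 j := by
            simp only [Finset.mem_Ioc] at hi
            simp only [Finset.mem_Icc]
            omega
          exact hGfin j hu i hmem
        have hgk1_ne : g (k + 1) ≠ ⊤ := by
          refine hGfin j hu (k + 1) ?_
          simp only [Finset.mem_Icc]
          omega
        have hρ2 : ρ ^ 2 ≤ (g (k + 1)).toReal :=
          (ENNReal.ofReal_le_iff_le_toReal hgk1_ne).mp hρ_sq
        have heq := hsplit k j hjk
        have hsum_ne : ∑ i ∈ Finset.Ioc k j, g i ≠ ⊤ := by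
          refine (ENNReal.sum_lt_top.mpr ?_).ne
          intro i hi
          exact (hIocj_ne i hi).lt_top
        have hGjeq : (Gsum g j).toReal
            = (Gsum g k).toReal + ∑ i ∈ Finset.Ioc k j, (g i).toReal := by
          rw [← heq, ENNReal.toReal_add hGk_ne hsum_ne, ENNReal.toReal_sum hIocj_ne]
        have hbound : ((j - k : ℕ) : ℝ) * ((g (k+1)).toReal)
            ≤ ∑ i ∈ Finset.Ioc k j, (g i).toReal := by
          have h1 := Finset.card_nsmul_le_sum (Finset.Ioc k j) (fun i => (g i).toReal)
            ((g (k+1)).toReal)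
            (fun i hi => ENNReal.toReal_mono (hIocj_ne i hi)
              (hgmono (by simpa using (Finset.mem_Ioc.mp hi).1)))
          rw [Nat.card_Ioc, nsmul_eq_mul] at h1
          exact h1
        have hcast : ((j - k : ℕ) : ℝ) = (j : ℝ) - (k : ℝ) := by
          rw [Nat.cast_sub hjk]
        rw [hcast] at hbound
        have hmul : ((j : ℝ) - k) * ρ ^ 2 ≤ ((j : ℝ) - k) * (g (k+1)).toReal := by
          have : (0:ℝ) ≤ (j : ℝ) - k := by
            have : (k:ℝ) ≤ j := by exact_mod_cast hjk
            linarith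
          exact mul_le_mul_of_nonneg_left hρ2 this
        linarith
  -- expansions
  have hin_u : ⟪u, (2:ℝ) • z⟫ = 2 * ⟪u, z⟫ := real_inner_smul_right _ _ _
  have hin_o : ⟪o, (2:ℝ) • z⟫ = 2 * ⟪o, z⟫ := real_inner_smul_right _ _ _
  have hexp : ∀ x : Evec n, 2 * ⟪x, z⟫ - ‖x‖ ^ 2
      = ∑ i, z i ^ 2 - ∑ i, (x i - z i) ^ 2 := by
    intro x
    rw [inner_eq, norm_sq_eq, Finset.mul_sum, ← Finset.sum_sub_distrib,
      ← Finset.sum_sub_distrib]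
    exact Finset.sum_congr rfl (fun i _ => by ring)
  have hsum_o : ∑ i, (o i - z i) ^ 2 = ∑ i ∈ Sᶜ, z i ^ 2 := by
    rw [← Finset.sum_add_sum_compl S (fun i => (o i - z i) ^ 2)]
    have h1 : ∑ i ∈ S, (o i - z i) ^ 2 = 0 :=
      Finset.sum_eq_zero (fun i hi => by rw [hzS i hi]; ring)
    have h2 : ∑ i ∈ Sᶜ, (o i - z i) ^ 2 = ∑ i ∈ Sᶜ, z i ^ 2 := by
      refine Finset.sum_congr rfl (fun i hi => ?_)
      have hio : o i = 0 := by
        have := Finset.mem_compl.mp hi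
        simpa only [hSdef, Finset.mem_filter, Finset.mem_univ, true_and, not_not]
          using this
      rw [hio]
      ring
    rw [h1, h2, zero_add]
  have hsum_u : ∑ i ∈ Tᶜ, z i ^ 2 ≤ ∑ i, (u i - z i) ^ 2 := by
    have h1 : ∑ i ∈ Tᶜ, z i ^ 2 = ∑ i ∈ Tᶜ, (u i - z i) ^ 2 := by
      refine Finset.sum_congr rfl (fun i hi => ?_)
      have hiu : u i = 0 := by
        have := Finset.mem_compl.mp hi
        simpa only [hTdef, Finset.mem_filter, Finset.mem_univ, true_and, not_not]
          using this
      rw [hiu]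
      ring
    rw [h1]
    exact Finset.sum_le_sum_of_subset_of_nonneg (Finset.subset_univ _)
      (fun i _ _ => sq_nonneg _)
  have hexp_u := hexp u
  have hexp_o := hexp o
  rw [hin_u, hin_o] at *
  rw [hr]
  linarith
end
end

section
/- For every y ∈ ℝⁿ, the convex conjugate of f(x) = G(card(x)) + ‖x‖² is given by f*(y) = Σ_{i=1}^n max(ỹ_i²/4 − g_i, 0), where ỹ denotes the sorted magnitudes of y and a summand with g_i = +∞ is interpreted as 0. -/
open scoped RealInnerProductSpace ENNReal
noncomputable section

lemma aux_strictMono_le {k n : ℕ} (f : Fin k → Fin n) (hf : StrictMono f) (i : Fin k) :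
    (i : ℕ) ≤ (f i : ℕ) := by
  obtain ⟨m, hm⟩ := i
  induction m with
  | zero => simp
  | succ p ih =>
    have hp : p < k := by omega
    have h1 : (f ⟨p, hp⟩ : ℕ) < (f ⟨p + 1, hm⟩ : ℕ) := hf (by simp [Fin.lt_def])
    have h2 := ih hp
    simp only [Fin.val_mk] at *
    omega

lemma aux_sum_le {n : ℕ} (t : Fin n → ℝ) (hmono : ∀ i j : Fin n, i ≤ j → t j ≤ t i)
    (T : Finset (Fin n)) :
    ∑ j ∈ T, t j ≤ ∑ j ∈ Finset.univ.filter (fun j : Fin n => (j : ℕ) < T.card), t j := by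
  classical
  set k := T.card with hk
  have hkn : k ≤ n := by
    simpa using (Finset.card_le_card (Finset.subset_univ T))
  set f : Fin k → Fin n := fun i => T.orderEmbOfFin rfl i with hf
  have hfsm : StrictMono f := (T.orderEmbOfFin rfl).strictMono
  have himg : Finset.image f Finset.univ = T := by
    apply Finset.coe_injective
    rw [Finset.coe_image, Finset.coe_univ, Set.image_univ]
    exact Finset.range_orderEmbOfFin T rfl
  have h1 : ∑ j ∈ T, t j = ∑ i : Fin k, t (f i) := by
    rw [← himg, Finset.sum_image (fun a _ b _ h => hfsm.injective h)]
  have himg2 : Finset.image (Fin.castLE hkn) Finset.univ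
      = Finset.univ.filter (fun j : Fin n => (j : ℕ) < k) := by
    ext j
    simp only [Finset.mem_image, Finset.mem_univ, true_and, Finset.mem_filter]
    constructor
    · rintro ⟨i, rfl⟩; exact i.isLt
    · intro hj; exact ⟨⟨j, hj⟩, rfl⟩
  have h2 : ∑ j ∈ Finset.univ.filter (fun j : Fin n => (j : ℕ) < k), t j
      = ∑ i : Fin k, t (Fin.castLE hkn i) := by
    rw [← himg2, Finset.sum_image (fun a _ b _ h => by
      simpa [Fin.ext_iff] using congrArg Fin.val h)]
  rw [h1, h2]
  refine Finset.sum_le_sum fun i _ => hmono _ _ ?_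
  simpa [Fin.le_def] using aux_strictMono_le f hfsm i

lemma ennreal_coe_ereal_toReal (a : ℝ≥0∞) (ha : a ≠ ⊤) :
    ((a.toReal : ℝ) : EReal) = (a : EReal) := by
  rw [← EReal.toReal_coe_ennreal]
  exact EReal.coe_toReal (by simpa [EReal.coe_ennreal_eq_top_iff]) (EReal.coe_ennreal_ne_bot a)

lemma inner_expand {n : ℕ} (x y : Evec n) : (⟪x, y⟫ : ℝ) = ∑ i, x i * y i := by
  simp [PiLp.inner_apply, RCLike.inner_apply, conj_trivial]
  exact Finset.sum_congr rfl fun i _ => mul_comm _ _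

lemma norm_sq_expand {n : ℕ} (x : Evec n) : (‖x‖ ^ 2 : ℝ) = ∑ i, (x i) ^ 2 := by
  rw [EuclideanSpace.norm_sq_eq]; simp

lemma expr_eq {n : ℕ} (g : ℕ → ℝ≥0∞) (y x : Evec n) (hx : Gsum g (spcard x) ≠ ⊤) :
    ((⟪x, y⟫ : ℝ) : EReal) - fobj g x
      = (((⟪x, y⟫ - ((Gsum g (spcard x)).toReal + ‖x‖ ^ 2) : ℝ)) : EReal) := by
  unfold fobj
  rw [← ennreal_coe_ereal_toReal _ hx]
  norm_cast

/-- The convex conjugate of `f(x) = G(card(x)) + ‖x‖²` is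
`f*(y) = Σ_{i=1}^n max(ỹ_i²/4 − g_i, 0)`, where summands with `g_i = +∞` are `0`. -/
theorem conjugate_formula
    {n : ℕ} (g : ℕ → ℝ≥0∞) (hg0 : g 0 = 0) (hgmono : Monotone g) (y : Evec n) :
    fconj g y = (((∑ i ∈ Finset.Icc 1 n,
      if g i = ⊤ then (0 : ℝ) else max ((sortedAbs y i) ^ 2 / 4 - (g i).toReal) 0) : ℝ) :
        EReal) := by
  classical
  set σ : Equiv.Perm (Fin n) := Tuple.sort (fun i : Fin n => -|y i|) with hσ
  set T : ℕ → ℝ := fun i =>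
    if g i = ⊤ then (0 : ℝ) else max ((sortedAbs y i) ^ 2 / 4 - (g i).toReal) 0 with hT
  have hT0 : ∀ i, 0 ≤ T i := by
    intro i; simp only [hT]; split <;> simp [le_max_right]
  have hs_eq : ∀ j (h1 : 1 ≤ j) (h2 : j ≤ n),
      sortedAbs y j = |y (σ ⟨j - 1, by omega⟩)| := by
    intro j h1 h2
    simp only [sortedAbs, hσ]
    rw [dif_pos ⟨h1, h2⟩]
  have hs_nonneg : ∀ j, 0 ≤ sortedAbs y j := by
    intro j
    simp only [sortedAbs]
    split <;> simp [abs_nonneg]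
  have hanti : ∀ i j : Fin n, i ≤ j → |y (σ j)| ≤ |y (σ i)| := by
    intro i j hij
    have := Tuple.monotone_sort (fun i : Fin n => -|y i|) hij
    simpa using this
  have hs_anti : ∀ i j, 1 ≤ i → i ≤ j → j ≤ n → sortedAbs y j ≤ sortedAbs y i := by
    intro i j h1 h2 h3
    rw [hs_eq i h1 (le_trans h2 h3), hs_eq j (le_trans h1 h2) h3]
    exact hanti _ _ (by simp only [Fin.le_def]; omega)
  have hIcc : ∀ k, k ≤ n →
      ∑ j ∈ Finset.univ.filter (fun j : Fin n => (j : ℕ) < k), (y (σ j)) ^ 2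
        = ∑ i ∈ Finset.Icc 1 k, (sortedAbs y i) ^ 2 := by
    intro k hkn
    refine Finset.sum_bij' (i := fun j _ => (j : ℕ) + 1)
      (j := fun i hi => (⟨i - 1, by simp only [Finset.mem_Icc] at hi; omega⟩ : Fin n))
      (hi := fun a ha => by
        simp only [Finset.mem_filter] at ha
        simp only [Finset.mem_Icc]
        omega)
      (hj := fun a ha => by
        simp only [Finset.mem_Icc] at ha
        simp only [Finset.mem_filter, Finset.mem_univ, true_and]
        omega)
      (fun a ha => by simp)
      (fun a ha => by
        simp only [Finset.mem_Icc] at ha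
        simp only [Fin.val_mk]
        omega)
      (fun a ha => by
        simp only [Finset.mem_filter] at ha
        rw [hs_eq ((a : ℕ) + 1) (by omega) (by omega)]
        rw [← sq_abs (y (σ a))]
        simp)
  have hsub : ∀ S : Finset (Fin n),
      ∑ i ∈ S, (y i) ^ 2 ≤ ∑ i ∈ Finset.Icc 1 S.card, (sortedAbs y i) ^ 2 := by
    intro S
    have hcard : S.card ≤ n := by simpa using Finset.card_le_card (Finset.subset_univ S)
    have h1 : ∑ i ∈ S, (y i) ^ 2 = ∑ j ∈ S.image σ.symm, (y (σ j)) ^ 2 := by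
      rw [Finset.sum_image (fun a _ b _ h => σ.symm.injective h)]
      exact Finset.sum_congr rfl fun a _ => by rw [Equiv.apply_symm_apply]
    have h2 := aux_sum_le (fun j => (y (σ j)) ^ 2)
      (fun i j hij => by
        simp only [← sq_abs (y (σ i)), ← sq_abs (y (σ j))]
        exact pow_le_pow_left₀ (abs_nonneg _) (hanti i j hij) 2)
      (S.image σ.symm)
    rw [Finset.card_image_of_injective _ σ.symm.injective] at h2
    rw [h1]
    exact le_trans h2 (le_of_eq (hIcc S.card hcard))
  refine le_antisymm ?_ ?_
  · -- upper bound
    rw [fconj]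
    refine iSup_le fun x => ?_
    by_cases hGx : Gsum g (spcard x) = ⊤
    · have hfx : fobj g x = ⊤ := by
        unfold fobj; rw [hGx, EReal.coe_ennreal_top, EReal.top_add_coe]
      rw [hfx, EReal.sub_top]; exact bot_le
    · rw [expr_eq g y x hGx, EReal.coe_le_coe_iff]
      set k := spcard x with hk
      have hkn : k ≤ n := by
        rw [hk]; unfold spcard
        simpa using Finset.card_filter_le Finset.univ (fun i => x i ≠ 0)
      have hgfin : ∀ i ∈ Finset.Icc 1 k, g i ≠ ⊤ := fun i hi =>
        ne_top_of_le_ne_top hGx (Finset.single_le_sum (fun j _ => zero_le) hi)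
      have htR : (Gsum g k).toReal = ∑ i ∈ Finset.Icc 1 k, (g i).toReal :=
        ENNReal.toReal_sum hgfin
      set S : Finset (Fin n) := Finset.univ.filter (fun i => x i ≠ 0) with hS
      have hScard : S.card = k := rfl
      have step1 : (⟪x, y⟫ : ℝ) - ‖x‖ ^ 2 ≤ (∑ i ∈ S, (y i) ^ 2) / 4 := by
        rw [inner_expand, norm_sq_expand, ← Finset.sum_sub_distrib, Finset.sum_div,
          hS, Finset.sum_filter]
        refine Finset.sum_le_sum fun i _ => ?_
        by_cases hxi : x i = 0
        · simp [hxi]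
        · rw [if_pos hxi]
          nlinarith [sq_nonneg (y i / 2 - x i)]
      have step2 : (∑ i ∈ S, (y i) ^ 2) ≤ ∑ i ∈ Finset.Icc 1 k, (sortedAbs y i) ^ 2 := by
        have := hsub S
        rwa [hScard] at this
      have step3 : ∑ i ∈ Finset.Icc 1 k, ((sortedAbs y i) ^ 2 / 4 - (g i).toReal)
          ≤ ∑ i ∈ Finset.Icc 1 n, T i := by
        calc ∑ i ∈ Finset.Icc 1 k, ((sortedAbs y i) ^ 2 / 4 - (g i).toReal)
            ≤ ∑ i ∈ Finset.Icc 1 k, T i := by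
              refine Finset.sum_le_sum fun i hi => ?_
              simp only [hT]
              rw [if_neg (hgfin i hi)]
              exact le_max_left _ _
          _ ≤ ∑ i ∈ Finset.Icc 1 n, T i :=
              Finset.sum_le_sum_of_subset_of_nonneg
                (Finset.Icc_subset_Icc_right hkn) (fun i _ _ => hT0 i)
      rw [htR]
      rw [Finset.sum_sub_distrib] at step3
      have h4 : (∑ i ∈ Finset.Icc 1 k, (sortedAbs y i) ^ 2) / 4
          = ∑ i ∈ Finset.Icc 1 k, (sortedAbs y i) ^ 2 / 4 :=
        Finset.sum_div (Finset.Icc 1 k) (fun i => (sortedAbs y i) ^ 2) 4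
      linarith
  · -- lower bound
    set P : ℕ → Prop := fun k => ∀ i ∈ Finset.Icc 1 k,
      g i ≠ ⊤ ∧ (g i).toReal ≤ (sortedAbs y i) ^ 2 / 4 with hP
    have hP0 : P 0 := by
      intro i hi
      simp only [Finset.mem_Icc] at hi
      omega
    set K : ℕ := Nat.findGreatest P n with hK
    have hPK : P K := Nat.findGreatest_spec (Nat.zero_le n) hP0
    have hKn : K ≤ n := Nat.findGreatest_le n
    have hTzero : ∀ i ∈ Finset.Icc (K + 1) n, T i = 0 := by
      intro i hi
      simp only [Finset.mem_Icc] at hi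
      by_cases hgi : g i = ⊤
      · simp [hT, hgi]
      · have h1 : ¬ P (K + 1) :=
          Nat.findGreatest_is_greatest (Nat.lt_succ_self K) (by omega)
        have hgk1 : g (K + 1) ≠ ⊤ := by
          intro h
          exact hgi (top_le_iff.mp (h ▸ hgmono (by omega : K + 1 ≤ i)))
        have h2 : (sortedAbs y (K + 1)) ^ 2 / 4 < (g (K + 1)).toReal := by
          by_contra hc
          push_neg at hc
          apply h1
          intro j hj
          simp only [Finset.mem_Icc] at hj
          by_cases hjK : j ≤ K
          · exact hPK j (Finset.mem_Icc.mpr ⟨hj.1, hjK⟩)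
          · have hje : j = K + 1 := by omega
            subst hje
            exact ⟨hgk1, hc⟩
        have h4 : (g (K + 1)).toReal ≤ (g i).toReal :=
          ENNReal.toReal_mono hgi (hgmono (by omega))
        have h5 : sortedAbs y i ≤ sortedAbs y (K + 1) :=
          hs_anti (K + 1) i (by omega) (by omega) (by omega)
        have h6 : (sortedAbs y i) ^ 2 ≤ (sortedAbs y (K + 1)) ^ 2 :=
          pow_le_pow_left₀ (hs_nonneg i) h5 2
        simp only [hT]
        rw [if_neg hgi, max_eq_right (by linarith)]
    have hVsum : ∑ i ∈ Finset.Icc 1 n, T i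
        = ∑ i ∈ Finset.Icc 1 K, ((sortedAbs y i) ^ 2 / 4 - (g i).toReal) := by
      have hsplit : ∑ i ∈ Finset.Ioc 0 K, T i + ∑ i ∈ Finset.Ioc K n, T i
          = ∑ i ∈ Finset.Ioc 0 n, T i :=
        Finset.sum_Ioc_consecutive T (Nat.zero_le K) hKn
      have e1 : Finset.Icc 1 n = Finset.Ioc 0 n := by rw [← Finset.Icc_add_one_left_eq_Ioc]; rfl
      have e2 : Finset.Icc 1 K = Finset.Ioc 0 K := by rw [← Finset.Icc_add_one_left_eq_Ioc]; rfl
      have e3 : Finset.Icc (K + 1) n = Finset.Ioc K n := by rw [← Finset.Icc_add_one_left_eq_Ioc]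
      rw [e1, ← hsplit, ← e3, Finset.sum_eq_zero hTzero, add_zero, ← e2]
      refine Finset.sum_congr rfl fun i hi => ?_
      obtain ⟨hgi, hle⟩ := hPK i hi
      simp only [hT]
      rw [if_neg hgi, max_eq_left (by linarith)]
    have hGKfin : Gsum g K ≠ ⊤ := by
      rw [Gsum, ne_eq, ENNReal.sum_eq_top]
      push_neg
      exact fun i hi => (hPK i hi).1
    set x0 : Evec n := WithLp.toLp 2 (fun i => if ((σ.symm i : Fin n) : ℕ) < K then y i / 2 else 0 : Fin n → ℝ)
      with hx0
    have hx0app : ∀ i, x0 i = if ((σ.symm i : Fin n) : ℕ) < K then y i / 2 else 0 :=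
      fun i => rfl
    set S0 : Finset (Fin n) := Finset.univ.filter (fun i => ((σ.symm i : Fin n) : ℕ) < K)
      with hS0
    have hcard0 : spcard x0 ≤ K := by
      have hsub1 : Finset.univ.filter (fun i => x0 i ≠ 0) ⊆ S0 := by
        intro i hi
        simp only [hS0, Finset.mem_filter, Finset.mem_univ, true_and] at hi ⊢
        by_contra hc
        exact hi (by rw [hx0app i, if_neg hc])
      have hcle : S0.card ≤ K := by
        have hbij : S0.card = (Finset.univ.filter (fun j : Fin n => (j : ℕ) < K)).card := by
          rw [hS0]
          refine Finset.card_bij (fun i _ => σ.symm i) ?_ ?_ ?_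
          · intro a ha
            simp only [Finset.mem_filter, Finset.mem_univ, true_and] at ha ⊢
            exact ha
          · exact fun a _ b _ h => σ.symm.injective h
          · intro b hb
            simp only [Finset.mem_filter, Finset.mem_univ, true_and] at hb ⊢
            exact ⟨σ b, by simpa using hb, by simp⟩
        rw [hbij]
        have := Finset.card_le_card_of_injOn
          (s := Finset.univ.filter (fun j : Fin n => (j : ℕ) < K))
          (f := fun j : Fin n => (j : ℕ))
          (t := Finset.range K)
          (by intro j hj
              simp only [Finset.mem_coe, Finset.mem_filter] at hj
              exact Finset.mem_range.mpr hj.2)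
          (fun a _ b _ h => Fin.ext h)
        simpa using this
      exact le_trans (Finset.card_le_card hsub1) hcle
    have hGx0le : Gsum g (spcard x0) ≤ Gsum g K :=
      Finset.sum_le_sum_of_subset (Finset.Icc_subset_Icc_right hcard0)
    have hGx0fin : Gsum g (spcard x0) ≠ ⊤ := ne_top_of_le_ne_top hGKfin hGx0le
    have hS0sum : ∑ i ∈ S0, (y i) ^ 2 = ∑ i ∈ Finset.Icc 1 K, (sortedAbs y i) ^ 2 := by
      rw [← hIcc K hKn]
      refine Finset.sum_nbij' (i := fun i => σ.symm i) (j := fun j => σ j)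
        (hi := fun a ha => by
          simp only [hS0, Finset.mem_filter, Finset.mem_univ, true_and] at ha ⊢
          exact ha)
        (hj := fun a ha => by
          simp only [hS0, Finset.mem_filter, Finset.mem_univ, true_and] at ha ⊢
          simpa using ha)
        (fun a _ => by simp)
        (fun a _ => by simp)
        (fun a _ => by rw [Equiv.apply_symm_apply])
    have hinner : (⟪x0, y⟫ : ℝ) = ∑ i ∈ S0, (y i) ^ 2 / 2 := by
      rw [inner_expand]
      calc ∑ i, x0 i * y i
          = ∑ i, (if ((σ.symm i : Fin n) : ℕ) < K then (y i) ^ 2 / 2 else 0) := by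
            refine Finset.sum_congr rfl fun i _ => ?_
            rw [hx0app i]
            split <;> ring
        _ = ∑ i ∈ S0, (y i) ^ 2 / 2 := (Finset.sum_filter _ _).symm
    have hnorm : (‖x0‖ ^ 2 : ℝ) = ∑ i ∈ S0, (y i) ^ 2 / 4 := by
      rw [norm_sq_expand]
      calc ∑ i, (x0 i) ^ 2
          = ∑ i, (if ((σ.symm i : Fin n) : ℕ) < K then (y i) ^ 2 / 4 else 0) := by
            refine Finset.sum_congr rfl fun i _ => ?_
            rw [hx0app i]
            split <;> ring
        _ = ∑ i ∈ S0, (y i) ^ 2 / 4 := (Finset.sum_filter _ _).symm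
    have hreal : (∑ i ∈ Finset.Icc 1 n, T i)
        ≤ (⟪x0, y⟫ : ℝ) - ((Gsum g (spcard x0)).toReal + ‖x0‖ ^ 2) := by
      rw [hinner, hnorm, hVsum]
      have ht1 : (Gsum g (spcard x0)).toReal ≤ (Gsum g K).toReal :=
        ENNReal.toReal_mono hGKfin hGx0le
      have ht2 : (Gsum g K).toReal = ∑ i ∈ Finset.Icc 1 K, (g i).toReal :=
        ENNReal.toReal_sum (fun i hi => (hPK i hi).1)
      have hqs : ∑ i ∈ S0, (y i) ^ 2 / 2 - ∑ i ∈ S0, (y i) ^ 2 / 4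
          = (∑ i ∈ S0, (y i) ^ 2) / 4 := by
        rw [← Finset.sum_sub_distrib, Finset.sum_div]
        refine Finset.sum_congr rfl fun i _ => by ring
      have hfs : (∑ i ∈ S0, (y i) ^ 2) / 4
          = ∑ i ∈ Finset.Icc 1 K, (sortedAbs y i) ^ 2 / 4 := by
        rw [hS0sum]
        exact Finset.sum_div (Finset.Icc 1 K) (fun i => (sortedAbs y i) ^ 2) 4
      rw [Finset.sum_sub_distrib]
      linarith
    calc ((∑ i ∈ Finset.Icc 1 n, T i : ℝ) : EReal)
        ≤ ((⟪x0, y⟫ - ((Gsum g (spcard x0)).toReal + ‖x0‖ ^ 2) : ℝ) : EReal) :=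
          EReal.coe_le_coe_iff.mpr hreal
      _ = ((⟪x0, y⟫ : ℝ) : EReal) - fobj g x0 := (expr_eq g y x0 hGx0fin).symm
      _ ≤ fconj g y := le_iSup (fun x : Evec n => ((⟪x, y⟫ : ℝ) : EReal) - fobj g x) x0
end
end

section
/- Let x ∈ ℝⁿ with card(x) = k, and suppose that x̃_i ∉ (0, √g_i) for every i (with √(+∞) = +∞, so this forces x̃_i = 0 whenever g_i = +∞). Then f**(x) = f(x) = Σ_{i=1}^k (g_i + x̃_i²); in particular the convex envelope is tight at x. -/
open scoped RealInnerProductSpace ENNReal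
noncomputable section

/-- `x` is a stationary point of the relaxation `R_g(·) + ‖A·−b‖²`:
`2z` is a subgradient of `f**` at `x`, where `z = (I − AᵀA)x + Aᵀb`. -/
def IsStationaryRelax {n m : ℕ} (g : ℕ → ℝ≥0∞) (A : Evec n →L[ℝ] Evec m) (b : Evec m)
    (x : Evec n) : Prop :=
  IsSubgrad g ((2 : ℝ) • zvec A b x) x

section AuxEnvelope

variable {n : ℕ}

private lemma aux_sum_le_range {t : ℕ → ℝ} (ht : Antitone t) (ht0 : ∀ j, 0 ≤ t j) :
    ∀ (m : ℕ) (U : Finset ℕ), U.card ≤ m → ∑ j ∈ U, t j ≤ ∑ j ∈ Finset.range m, t j := by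
  intro m
  induction m with
  | zero =>
    intro U hU
    simp only [Nat.le_zero, Finset.card_eq_zero] at hU
    simp [hU]
  | succ m ih =>
    intro U hU
    rcases Nat.lt_or_ge U.card (m+1) with h | h
    · calc ∑ j ∈ U, t j ≤ ∑ j ∈ Finset.range m, t j := ih U (by omega)
        _ ≤ ∑ j ∈ Finset.range (m+1), t j := by
            apply Finset.sum_le_sum_of_subset_of_nonneg
            · exact Finset.range_subset_range.mpr (by omega)
            · intro i _ _; exact ht0 i
    · have hcard : U.card = m + 1 := le_antisymm hU h
      have hne : U.Nonempty := Finset.card_pos.mp (by omega)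
      set u := U.max' hne with hu
      have humem : u ∈ U := U.max'_mem hne
      have hum : m ≤ u := by
        have : U ⊆ Finset.range (u+1) := by
          intro j hj
          simp only [Finset.mem_range]
          have := U.le_max' j hj
          omega
        have := Finset.card_le_card this
        simp [hcard] at this
        omega
      have : ∑ j ∈ U, t j = ∑ j ∈ U.erase u, t j + t u := by
        have := Finset.add_sum_erase U t humem
        linarith
      rw [this, Finset.sum_range_succ]
      have h1 : ∑ j ∈ U.erase u, t j ≤ ∑ j ∈ Finset.range m, t j := by
        apply ih
        rw [Finset.card_erase_of_mem humem, hcard]; omega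
      have h2 : t u ≤ t m := ht hum
      linarith

private lemma aux_sum_Ico_le {t : ℕ → ℝ} (ht : Antitone t) (ht0 : ∀ j, 0 ≤ t j)
    {k m : ℕ} (U : Finset ℕ) (hUk : U ⊆ Finset.range k) (hcard : k - m ≤ U.card) :
    ∑ j ∈ Finset.Ico m k, t j ≤ ∑ j ∈ U, t j := by
  rcases le_or_gt k m with hkm | hmk
  · rw [Finset.Ico_eq_empty (by omega)]
    exact Finset.sum_nonneg fun j _ => ht0 j
  · have hUcard : U.card ≤ k := by
      have := Finset.card_le_card hUk
      simpa using this
    set V := Finset.range k \ U with hV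
    have hVcard : V.card = k - U.card := by
      rw [hV, Finset.card_sdiff_of_subset hUk, Finset.card_range]
    have hsplit : ∑ j ∈ Finset.range k, t j = ∑ j ∈ V, t j + ∑ j ∈ U, t j := by
      rw [hV]
      exact (Finset.sum_sdiff hUk).symm
    have hVle : ∑ j ∈ V, t j ≤ ∑ j ∈ Finset.range m, t j :=
      aux_sum_le_range ht ht0 m V (by omega)
    have hIco : ∑ j ∈ Finset.Ico m k, t j
        = ∑ j ∈ Finset.range k, t j - ∑ j ∈ Finset.range m, t j := by
      have h0 := Finset.sum_Ico_consecutive t (Nat.zero_le m) (le_of_lt hmk)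
      simp only [Finset.range_eq_Ico]
      linarith
    linarith

/-- The sorting permutation for `x`. -/
private def sperm (x : Evec n) : Equiv.Perm (Fin n) := Tuple.sort (fun i : Fin n => -|x i|)

/-- `0`-based sorted absolute values, as a function on `ℕ`. -/
private def sN (x : Evec n) : ℕ → ℝ :=
  fun j => if h : j < n then |x (sperm x ⟨j, h⟩)| else 0

private lemma sortedAbs_eq_sN (x : Evec n) {i : ℕ} (hi : 1 ≤ i) :
    sortedAbs x i = sN x (i - 1) := by
  unfold sortedAbs sN sperm
  rcases le_or_gt i n with h | h
  · rw [dif_pos ⟨hi, h⟩, dif_pos (by omega)]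
  · rw [dif_neg (by omega), dif_neg (by omega)]

private lemma sN_nonneg (x : Evec n) (j : ℕ) : 0 ≤ sN x j := by
  unfold sN; split
  · exact abs_nonneg _
  · exact le_refl 0

private lemma sN_antitone (x : Evec n) : Antitone (sN x) := by
  have hmono := Tuple.monotone_sort (fun i : Fin n => -|x i|)
  intro a b hab
  unfold sN
  rcases lt_or_ge a n with ha | ha
  · rcases lt_or_ge b n with hb | hb
    · rw [dif_pos ha, dif_pos hb]
      have := hmono (show (⟨a, ha⟩ : Fin n) ≤ ⟨b, hb⟩ from hab)
      simp only [Function.comp_apply] at this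
      have := neg_le_neg this
      simpa [sperm] using this
    · rw [dif_pos ha, dif_neg (by omega)]
      exact abs_nonneg _
  · rw [dif_neg (by omega), dif_neg (by omega)]

private lemma card_sN_support (x : Evec n) :
    ((Finset.range n).filter (fun j => sN x j ≠ 0)).card = spcard x := by
  unfold spcard
  rw [Finset.card_filter, Finset.card_filter]
  rw [← Fin.sum_univ_eq_sum_range (fun j => if sN x j ≠ 0 then 1 else 0) n]
  rw [← Equiv.sum_comp (sperm x) (fun i => if x i ≠ 0 then 1 else 0)]
  apply Finset.sum_congr rfl
  intro j _
  have : sN x j.val = |x (sperm x j)| := by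
    unfold sN
    rw [dif_pos j.isLt]
  rw [this]
  simp [abs_ne_zero]

private lemma spcard_le (x : Evec n) : spcard x ≤ n := by
  unfold spcard
  calc (Finset.univ.filter (fun i => x i ≠ 0)).card ≤ (Finset.univ : Finset (Fin n)).card :=
        Finset.card_le_card (Finset.filter_subset _ _)
    _ = n := by simp

private lemma sN_support_iff (x : Evec n) (j : ℕ) : sN x j ≠ 0 ↔ j < spcard x := by
  have hcard := card_sN_support x
  set P := (Finset.range n).filter (fun j => sN x j ≠ 0) with hP
  constructor
  · intro hj
    have hjn : j < n := by
      by_contra h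
      exact hj (by unfold sN; rw [dif_neg h])
    have hsub : Finset.range (j+1) ⊆ P := by
      intro j' hj'
      simp only [Finset.mem_range] at hj'
      rw [hP, Finset.mem_filter, Finset.mem_range]
      refine ⟨by omega, ?_⟩
      have h1 : sN x j ≤ sN x j' := sN_antitone x (by omega)
      have h2 : 0 ≤ sN x j := sN_nonneg x j
      have : 0 < sN x j := lt_of_le_of_ne h2 (Ne.symm hj)
      exact (lt_of_lt_of_le this h1).ne'
    have := Finset.card_le_card hsub
    simp only [Finset.card_range] at this
    omega
  · intro hj
    by_contra h
    have hsub : P ⊆ Finset.range j := by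
      intro j' hj'
      rw [hP, Finset.mem_filter, Finset.mem_range] at hj'
      simp only [Finset.mem_range]
      by_contra h'
      have h1 : sN x j' ≤ sN x j := sN_antitone x (by omega)
      rw [h] at h1
      exact hj'.2 (le_antisymm h1 (sN_nonneg x j'))
    have := Finset.card_le_card hsub
    simp only [Finset.card_range] at this
    omega

private lemma norm_sq_eq_sum (x : Evec n) : ‖x‖^2 = ∑ j : Fin n, (x j)^2 := by
  rw [EuclideanSpace.norm_eq]
  rw [Real.sq_sqrt (by positivity)]
  simp [sq_abs]

private lemma sum_sN_sq (x : Evec n) : ∑ j ∈ Finset.range n, (sN x j)^2 = ‖x‖^2 := by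
  rw [norm_sq_eq_sum]
  rw [← Fin.sum_univ_eq_sum_range (fun j => (sN x j)^2) n]
  rw [← Equiv.sum_comp (sperm x) (fun i => (x i)^2)]
  apply Finset.sum_congr rfl
  intro j _
  have : sN x j.val = |x (sperm x j)| := by unfold sN; rw [dif_pos j.isLt]
  rw [this, sq_abs]

private lemma sN_sq_antitone (x : Evec n) : Antitone (fun j => (sN x j)^2) := by
  intro a b hab
  have h1 := sN_antitone x hab
  have h2 := sN_nonneg x b
  simp only
  nlinarith

private lemma key_ineq (x w : Evec n) :
    ∑ j ∈ Finset.Ico (spcard w) (spcard x), (sN x j)^2 ≤ ‖w - x‖^2 := by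
  classical
  set k := spcard x
  set m := spcard w with hm
  set S := Finset.univ.filter (fun j : Fin n => x j ≠ 0 ∧ w j = 0) with hS
  have hinj : Function.Injective (fun j : Fin n => ((sperm x).symm j).val) :=
    Fin.val_injective.comp (sperm x).symm.injective
  set U := S.image (fun j : Fin n => ((sperm x).symm j).val) with hU
  have hcardU : U.card = S.card := Finset.card_image_of_injective _ hinj
  have hsNU : ∀ j ∈ S, sN x (((sperm x).symm j).val) = |x j| := by
    intro j hj
    unfold sN
    rw [dif_pos (((sperm x).symm j).isLt)]
    congr 1
    rw [Fin.eta]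
    exact congrArg x ((sperm x).apply_symm_apply j)
  have hUk : U ⊆ Finset.range k := by
    intro u hu
    rw [hU, Finset.mem_image] at hu
    obtain ⟨j, hjS, rfl⟩ := hu
    rw [Finset.mem_range, ← sN_support_iff]
    rw [hsNU j hjS]
    rw [hS, Finset.mem_filter] at hjS
    simpa using hjS.2.1
  have hcardS : k - m ≤ S.card := by
    have hsub : Finset.univ.filter (fun j : Fin n => x j ≠ 0) ⊆
        S ∪ Finset.univ.filter (fun j : Fin n => w j ≠ 0) := by
      intro j hj
      rw [Finset.mem_filter] at hj
      rcases eq_or_ne (w j) 0 with h | h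
      · exact Finset.mem_union_left _
          (by rw [hS, Finset.mem_filter]; exact ⟨Finset.mem_univ _, hj.2, h⟩)
      · exact Finset.mem_union_right _
          (by rw [Finset.mem_filter]; exact ⟨Finset.mem_univ _, h⟩)
    have h1 := Finset.card_le_card hsub
    have h2 := Finset.card_union_le S (Finset.univ.filter (fun j : Fin n => w j ≠ 0))
    have hk' : (Finset.univ.filter (fun j : Fin n => x j ≠ 0)).card = k := rfl
    have hm' : (Finset.univ.filter (fun j : Fin n => w j ≠ 0)).card = m := rfl
    omega
  have hsum1 : ∑ u ∈ U, (sN x u)^2 = ∑ j ∈ S, (x j)^2 := by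
    rw [hU, Finset.sum_image (fun a _ b _ h => hinj h)]
    apply Finset.sum_congr rfl
    intro j hj
    rw [hsNU j hj, sq_abs]
  have hsum2 : ∑ j ∈ S, (x j)^2 ≤ ‖w - x‖^2 := by
    rw [norm_sq_eq_sum]
    have happ : ∀ j : Fin n, (w - x) j = w j - x j := fun j => rfl
    calc ∑ j ∈ S, (x j)^2 = ∑ j ∈ S, ((w - x) j)^2 := by
          apply Finset.sum_congr rfl
          intro j hj
          rw [hS, Finset.mem_filter] at hj
          rw [happ j, hj.2.2, zero_sub, neg_sq]
      _ ≤ ∑ j : Fin n, ((w - x) j)^2 := by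
          apply Finset.sum_le_sum_of_subset_of_nonneg (Finset.subset_univ S)
          intro i _ _; positivity
  calc ∑ j ∈ Finset.Ico m k, (sN x j)^2 ≤ ∑ u ∈ U, (sN x u)^2 :=
        aux_sum_Ico_le (sN_sq_antitone x) (fun j => by positivity) U hUk (by omega)
    _ = ∑ j ∈ S, (x j)^2 := hsum1
    _ ≤ ‖w - x‖^2 := hsum2

private lemma coe_ennreal_eq_coe_toReal {a : ℝ≥0∞} (ha : a ≠ ⊤) :
    ((a : EReal)) = ((a.toReal : ℝ) : EReal) := by
  rw [← EReal.toReal_coe_ennreal]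
  exact (EReal.coe_toReal (by simpa using ha) (EReal.coe_ennreal_ne_bot a)).symm


private lemma sum_Ioc_shift (f : ℕ → ℝ) (a b : ℕ) :
    ∑ i ∈ Finset.Ioc a b, f i = ∑ j ∈ Finset.Ico a b, f (j+1) := by
  rw [← Finset.Ico_add_one_add_one_eq_Ioc, Finset.sum_Ico_eq_sum_range, Finset.sum_Ico_eq_sum_range]
  apply Finset.sum_congr (by rw [Nat.add_sub_add_right])
  intro i _
  congr 1
  omega

private lemma Icc_one_eq_Ioc (k : ℕ) : Finset.Icc 1 k = Finset.Ioc 0 k := by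
  ext i
  simp only [Finset.mem_Icc, Finset.mem_Ioc]
  omega

private lemma ereal_cases (d : EReal) : d = ⊥ ∨ (∃ b : ℝ, d = (b : EReal)) ∨ d = ⊤ := by
  induction d using EReal.rec with
  | bot => exact Or.inl rfl
  | coe b => exact Or.inr (Or.inl ⟨b, rfl⟩)
  | top => exact Or.inr (Or.inr rfl)

private def realCoeHom : ℝ →+ EReal :=
  ⟨⟨fun r => (r : EReal), EReal.coe_zero⟩, fun a b => EReal.coe_add a b⟩

private lemma coe_real_sum {ι : Type*} (s : Finset ι) (t : ι → ℝ) :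
    ((∑ i ∈ s, t i : ℝ) : EReal) = ∑ i ∈ s, ((t i : ℝ) : EReal) :=
  map_sum realCoeHom t s

end AuxEnvelope

/-- If `card(x) = k` and no sorted magnitude `x̃_i` lies in
`(0, √g_i)`, then the convex envelope is tight at `x`:
`f**(x) = f(x) = Σ_{i=1}^k (g_i + x̃_i²)`. -/
theorem envelope_tightness
    {n : ℕ} (g : ℕ → ℝ≥0∞) (hg0 : g 0 = 0) (hgmono : Monotone g)
    (x : Evec n) (k : ℕ) (hk : spcard x = k)
    (hx : ∀ i, ¬(0 < sortedAbs x i ∧ ENNReal.ofReal (sortedAbs x i) < sqrtE (g i))) :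
    fbiconj g x = fobj g x ∧
    fobj g x = ∑ i ∈ Finset.Icc 1 k,
      (((g i : ℝ≥0∞) : EReal) + (((sortedAbs x i) ^ 2 : ℝ) : EReal)) := by
  subst hk
  set k := spcard x with hk
  have hkn : k ≤ n := spcard_le x
  have hpos : ∀ i, 1 ≤ i → i ≤ k → 0 < sortedAbs x i := by
    intro i h1 h2
    have h3 : sN x (i-1) ≠ 0 := (sN_support_iff x (i-1)).mpr (by omega)
    rw [sortedAbs_eq_sN x h1]
    exact lt_of_le_of_ne (sN_nonneg x _) (Ne.symm h3)
  have hgle : ∀ i, 1 ≤ i → i ≤ k → g i ≤ ENNReal.ofReal ((sortedAbs x i)^2) := by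
    intro i h1 h2
    have h4 : ¬ (ENNReal.ofReal (sortedAbs x i) < sqrtE (g i)) :=
      fun hc => hx i ⟨hpos i h1 h2, hc⟩
    have h5 : sqrtE (g i) ≤ ENNReal.ofReal (sortedAbs x i) := not_lt.mp h4
    have h6 : (sqrtE (g i))^(2:ℕ) ≤ (ENNReal.ofReal (sortedAbs x i))^(2:ℕ) :=
      pow_le_pow_left' h5 2
    rw [← ENNReal.ofReal_pow (le_of_lt (hpos i h1 h2))] at h6
    calc g i = (sqrtE (g i))^(2:ℕ) := by
          unfold sqrtE
          rw [← ENNReal.rpow_natCast (g i ^ (1/2:ℝ)) 2, ← ENNReal.rpow_mul]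
          norm_num
      _ ≤ _ := h6
  have hgtop : ∀ i ∈ Finset.Icc 1 k, g i ≠ ⊤ := by
    intro i hi
    rw [Finset.mem_Icc] at hi
    exact ne_top_of_le_ne_top ENNReal.ofReal_ne_top (hgle i hi.1 hi.2)
  have hGtop : Gsum g k ≠ ⊤ := by
    unfold Gsum
    rw [ENNReal.sum_ne_top]
    exact hgtop
  have hGksum : (Gsum g k).toReal = ∑ i ∈ Finset.Icc 1 k, (g i).toReal :=
    ENNReal.toReal_sum hgtop
  have hGle : ∀ i, 1 ≤ i → i ≤ k → (g i).toReal ≤ (sortedAbs x i)^2 := by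
    intro i h1 h2
    exact ENNReal.toReal_le_of_le_ofReal (by positivity) (hgle i h1 h2)
  set Gk := (Gsum g k).toReal with hGkdef
  have hnormk : ∑ i ∈ Finset.Icc 1 k, (sortedAbs x i)^2 = ‖x‖^2 := by
    have h1 : ∑ i ∈ Finset.Icc 1 n, (sortedAbs x i)^2 = ∑ j ∈ Finset.range n, (sN x j)^2 := by
      rw [Icc_one_eq_Ioc, sum_Ioc_shift (fun i => (sortedAbs x i)^2) 0 n]
      rw [Finset.range_eq_Ico]
      apply Finset.sum_congr rfl
      intro j _
      rw [sortedAbs_eq_sN x (by omega)]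
      norm_num
    have h2 : ∑ i ∈ Finset.Icc 1 k, (sortedAbs x i)^2 = ∑ i ∈ Finset.Icc 1 n, (sortedAbs x i)^2 := by
      apply Finset.sum_subset (Finset.Icc_subset_Icc_right hkn)
      intro i hi hni
      rw [Finset.mem_Icc] at hi hni
      have hik : k < i := by omega
      have : sN x (i-1) = 0 := by
        by_contra h
        have := (sN_support_iff x (i-1)).mp h
        omega
      rw [sortedAbs_eq_sN x (by omega), this]
      norm_num
    rw [h2, h1, sum_sN_sq]
  have hbound : ∀ w : Evec n, Gsum g (spcard w) ≠ ⊤ →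
      Gk ≤ (Gsum g (spcard w)).toReal + ‖w - x‖^2 := by
    intro w hw
    set m := spcard w with hm
    have hmtop : ∀ i ∈ Finset.Icc 1 m, g i ≠ ⊤ := by
      intro i hi
      exact ENNReal.sum_ne_top.mp hw i hi
    have hGm : (Gsum g m).toReal = ∑ i ∈ Finset.Icc 1 m, (g i).toReal :=
      ENNReal.toReal_sum hmtop
    have hnn : (0:ℝ) ≤ ‖w - x‖^2 := by positivity
    rcases le_or_gt k m with hkm | hmk
    · have hle : Gsum g k ≤ Gsum g m :=
        Finset.sum_le_sum_of_subset (Finset.Icc_subset_Icc_right hkm)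
      have := ENNReal.toReal_mono hw hle
      rw [← hGkdef] at this
      linarith
    · have hsplit : ∑ i ∈ Finset.Icc 1 k, (g i).toReal
          = ∑ i ∈ Finset.Icc 1 m, (g i).toReal + ∑ i ∈ Finset.Ioc m k, (g i).toReal := by
        rw [Icc_one_eq_Ioc, Icc_one_eq_Ioc]
        exact (Finset.sum_Ioc_consecutive _ (Nat.zero_le m) (le_of_lt hmk)).symm
      have hterm : ∑ i ∈ Finset.Ioc m k, (g i).toReal
          ≤ ∑ i ∈ Finset.Ioc m k, (sortedAbs x i)^2 := by
        apply Finset.sum_le_sum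
        intro i hi
        rw [Finset.mem_Ioc] at hi
        exact hGle i (by omega) hi.2
      have hshift : ∑ i ∈ Finset.Ioc m k, (sortedAbs x i)^2
          = ∑ j ∈ Finset.Ico m k, (sN x j)^2 := by
        rw [sum_Ioc_shift (fun i => (sortedAbs x i)^2) m k]
        apply Finset.sum_congr rfl
        intro j _
        rw [sortedAbs_eq_sN x (by omega)]
        norm_num
      have hkey := key_ineq x w
      rw [← hm, ← hk] at hkey
      rw [hGksum, hGm, hsplit]
      linarith
  have hfobjx : fobj g x = ((Gk + ‖x‖^2 : ℝ) : EReal) := by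
    unfold fobj
    rw [← hk, coe_ennreal_eq_coe_toReal hGtop, ← hGkdef, EReal.coe_add]
  have hip : ⟪x, (2:ℝ)•x⟫ = 2 * ‖x‖^2 := by
    rw [real_inner_smul_right, real_inner_self_eq_norm_sq]
  have hfconj : fconj g ((2:ℝ)•x) = ((‖x‖^2 - Gk : ℝ) : EReal) := by
    apply le_antisymm
    · unfold fconj
      apply iSup_le
      intro w
      unfold fobj
      rcases eq_or_ne (Gsum g (spcard w)) ⊤ with hw | hw
      · rw [hw, EReal.coe_ennreal_top, EReal.top_add_coe, EReal.sub_top]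
        exact bot_le
      · rw [coe_ennreal_eq_coe_toReal hw, ← EReal.coe_add, ← EReal.coe_sub,
          EReal.coe_le_coe_iff]
        have hb := hbound w hw
        have hns : ‖w - x‖^2 = ‖w‖^2 - 2*⟪w,x⟫ + ‖x‖^2 := norm_sub_sq_real w x
        rw [real_inner_smul_right]
        linarith
    · unfold fconj
      refine le_trans ?_ (le_iSup _ x)
      rw [hfobjx, hip, ← EReal.coe_sub, EReal.coe_le_coe_iff]
      linarith
  constructor
  · apply le_antisymm
    · unfold fbiconj
      apply iSup_le
      intro y
      have hy : ((⟪x, y⟫ : ℝ) : EReal) - fobj g x ≤ fconj g y := by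
        unfold fconj
        exact le_iSup (fun w : Evec n => ((⟪w, y⟫ : ℝ) : EReal) - fobj g w) x
      rw [hfobjx] at hy ⊢
      rcases ereal_cases (fconj g y) with hd | ⟨b, hd⟩ | hd
      · rw [hd, ← EReal.coe_sub] at hy
        exact absurd (le_bot_iff.mp hy) (EReal.coe_ne_bot _)
      · rw [hd] at hy ⊢
        rw [← EReal.coe_sub, EReal.coe_le_coe_iff] at hy ⊢
        linarith
      · rw [hd, EReal.sub_top]
        exact bot_le
    · unfold fbiconj
      refine le_trans ?_ (le_iSup _ ((2:ℝ)•x))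
      rw [hfconj, hfobjx, hip, ← EReal.coe_sub, EReal.coe_le_coe_iff]
      linarith
  · rw [hfobjx]
    have hterm : ∀ i ∈ Finset.Icc 1 k,
        ((g i : EReal) + (((sortedAbs x i)^2 : ℝ) : EReal))
          = ((((g i).toReal + (sortedAbs x i)^2 : ℝ)) : EReal) := by
      intro i hi
      rw [coe_ennreal_eq_coe_toReal (hgtop i hi), EReal.coe_add]
    rw [Finset.sum_congr rfl hterm, ← coe_real_sum]
    congr 1
    rw [Finset.sum_add_distrib, ← hGksum, hnormk]
end
end

section
/- Let d ≤ 1 be a real number. Let x, z, x', z' ∈ ℝⁿ and suppose there exist a sign vector s ∈ {−1,1}ⁿ and a permutation matrix π with x = D_s π x̃ and z = D_s π z̃, and a sign vector s' and permutation matrix π' with x' = D_{s'} π' x̃' and z' = D_{s'} π' z̃', where x̃, z̃, x̃', z̃' are the respective sorted magnitude vectors (nonnegative and nonincreasing) and z̃_i ≥ x̃_i, z̃'_i ≥ x̃'_i for all i. If ⟨ρ z̃' − z̃, ρ x̃' − x̃⟩ > d·‖ρ x̃' − x̃‖² for every n×n permutation matrix ρ, then ⟨z' − z, x' − x⟩ >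 d·‖x' − x‖². -/
open scoped RealInnerProductSpace ENNReal
noncomputable section

lemma sortedAbs_nonneg' {n : ℕ} (x : Evec n) (j : ℕ) : 0 ≤ sortedAbs x j := by
  unfold sortedAbs; split <;> positivity

/-- If `x = D_s π x̃`, `z = D_s π z̃` (same signs and permutation),
`x' = D_{s'} π' x̃'`, `z' = D_{s'} π' z̃'`, with `z̃ ≥ x̃` and `z̃' ≥ x̃'` entrywise, and
`⟨ρz̃' − z̃, ρx̃' − x̃⟩ > d‖ρx̃' − x̃‖²` for every permutation `ρ`, then
`⟨z' − z, x' − x⟩ > d‖x' − x‖²`. -/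
theorem sorted_growth_transfer
    {n : ℕ} (d : ℝ) (hd : d ≤ 1)
    (x z x' z' : Evec n)
    (s : Fin n → ℝ) (σ : Equiv.Perm (Fin n))
    (hs : ∀ i, s i = 1 ∨ s i = -1)
    (hxs : ∀ i, x i = s i * sortedAbs x ((σ i : ℕ) + 1))
    (hzs : ∀ i, z i = s i * sortedAbs z ((σ i : ℕ) + 1))
    (s' : Fin n → ℝ) (σ' : Equiv.Perm (Fin n))
    (hs' : ∀ i, s' i = 1 ∨ s' i = -1)
    (hxs' : ∀ i, x' i = s' i * sortedAbs x' ((σ' i : ℕ) + 1))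
    (hzs' : ∀ i, z' i = s' i * sortedAbs z' ((σ' i : ℕ) + 1))
    (hzx : ∀ i : ℕ, sortedAbs x i ≤ sortedAbs z i)
    (hzx' : ∀ i : ℕ, sortedAbs x' i ≤ sortedAbs z' i)
    (hmain : ∀ ρ : Equiv.Perm (Fin n),
      d * ∑ i : Fin n, (sortedAbs x' ((ρ i : ℕ) + 1) - sortedAbs x ((i : ℕ) + 1)) ^ 2
        < ∑ i : Fin n, (sortedAbs z' ((ρ i : ℕ) + 1) - sortedAbs z ((i : ℕ) + 1)) *
            (sortedAbs x' ((ρ i : ℕ) + 1) - sortedAbs x ((i : ℕ) + 1))) :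
    d * ‖x' - x‖ ^ 2 < ⟪z' - z, x' - x⟫ := by
  
  set ρ : Equiv.Perm (Fin n) := σ.symm.trans σ' with hρ
  have hmain' := hmain ρ
  have hinner : ⟪z' - z, x' - x⟫ = ∑ i : Fin n, (z' i - z i) * (x' i - x i) := by
    rw [PiLp.inner_apply]
    simp [PiLp.sub_apply, mul_comm]
  have hnorm : ‖x' - x‖ ^ 2 = ∑ i : Fin n, (x' i - x i) ^ 2 := by
    rw [← real_inner_self_eq_norm_sq, PiLp.inner_apply]
    simp [PiLp.sub_apply, sq]
  rw [hinner, hnorm]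
  have hper : ∀ i : Fin n,
      (sortedAbs z' ((σ' i : ℕ)+1) - sortedAbs z ((σ i : ℕ)+1)) *
        (sortedAbs x' ((σ' i : ℕ)+1) - sortedAbs x ((σ i : ℕ)+1))
      - d * (sortedAbs x' ((σ' i : ℕ)+1) - sortedAbs x ((σ i : ℕ)+1)) ^ 2
      ≤ (z' i - z i) * (x' i - x i) - d * (x' i - x i) ^ 2 := by
    intro i
    have hx := hxs i; have hz := hzs i; have hx' := hxs' i; have hz' := hzs' i
    have ha : 0 ≤ sortedAbs x ((σ i : ℕ)+1) := sortedAbs_nonneg' _ _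
    have ha' : 0 ≤ sortedAbs x' ((σ' i : ℕ)+1) := sortedAbs_nonneg' _ _
    have hba : sortedAbs x ((σ i : ℕ)+1) ≤ sortedAbs z ((σ i : ℕ)+1) := hzx _
    have hba' : sortedAbs x' ((σ' i : ℕ)+1) ≤ sortedAbs z' ((σ' i : ℕ)+1) := hzx' _
    rcases hs i with h1 | h1 <;> rcases hs' i with h2 | h2 <;>
      rw [hx, hz, hx', hz', h1, h2] <;>
      nlinarith [mul_nonneg ha' (sub_nonneg.2 hba), mul_nonneg ha (sub_nonneg.2 hba'),
        mul_nonneg (mul_nonneg (sub_nonneg.2 hd) ha) ha']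
  have hsum := Finset.sum_le_sum (s := Finset.univ) (fun i _ => hper i)
  have hre1 : ∑ i : Fin n,
      ((sortedAbs z' ((σ' i : ℕ)+1) - sortedAbs z ((σ i : ℕ)+1)) *
        (sortedAbs x' ((σ' i : ℕ)+1) - sortedAbs x ((σ i : ℕ)+1))
      - d * (sortedAbs x' ((σ' i : ℕ)+1) - sortedAbs x ((σ i : ℕ)+1)) ^ 2)
      = ∑ i : Fin n,
      ((sortedAbs z' ((ρ i : ℕ)+1) - sortedAbs z ((i : ℕ)+1)) *
        (sortedAbs x' ((ρ i : ℕ)+1) - sortedAbs x ((i : ℕ)+1))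
      - d * (sortedAbs x' ((ρ i : ℕ)+1) - sortedAbs x ((i : ℕ)+1)) ^ 2) := by
    rw [← Equiv.sum_comp σ.symm (fun i =>
      ((sortedAbs z' ((σ' i : ℕ)+1) - sortedAbs z ((σ i : ℕ)+1)) *
        (sortedAbs x' ((σ' i : ℕ)+1) - sortedAbs x ((σ i : ℕ)+1))
      - d * (sortedAbs x' ((σ' i : ℕ)+1) - sortedAbs x ((σ i : ℕ)+1)) ^ 2))]
    simp [hρ, Equiv.apply_symm_apply]
  have e1 : ∑ i : Fin n,
      ((sortedAbs z' ((ρ i : ℕ)+1) - sortedAbs z ((i : ℕ)+1)) *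
        (sortedAbs x' ((ρ i : ℕ)+1) - sortedAbs x ((i : ℕ)+1))
      - d * (sortedAbs x' ((ρ i : ℕ)+1) - sortedAbs x ((i : ℕ)+1)) ^ 2)
      = (∑ i : Fin n, (sortedAbs z' ((ρ i : ℕ)+1) - sortedAbs z ((i : ℕ)+1)) *
        (sortedAbs x' ((ρ i : ℕ)+1) - sortedAbs x ((i : ℕ)+1)))
      - d * ∑ i : Fin n, (sortedAbs x' ((ρ i : ℕ)+1) - sortedAbs x ((i : ℕ)+1)) ^ 2 := by
    rw [Finset.sum_sub_distrib, Finset.mul_sum]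
  have e2 : ∑ i : Fin n, ((z' i - z i) * (x' i - x i) - d * (x' i - x i) ^ 2)
      = (∑ i : Fin n, (z' i - z i) * (x' i - x i)) - d * ∑ i : Fin n, (x' i - x i) ^ 2 := by
    rw [Finset.sum_sub_distrib, Finset.mul_sum]
  rw [hre1, e1, e2] at hsum
  linarith
end
end

section
/- Suppose b = Ay + ε where card(y) ≤ k and 2k ≤ n, and A satisfies the RIP of order 2k with constant δ_{2k} ∈ (0,1). If x minimizes ‖Aw − b‖² over all w ∈ ℝⁿ with card(w) ≤ k, then ‖x − y‖ ≤ 2‖ε‖ / √(1−δ_{2k}). -/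
open scoped RealInnerProductSpace ENNReal
noncomputable section

/-- If `b = Ay + ε` with `card(y) ≤ k`, `2k ≤ n`, and RIP of order
`2k` holds with constant `δ ∈ (0,1)`, then any minimizer `x` of `‖Aw − b‖²` over
`card(w) ≤ k` satisfies `‖x − y‖ ≤ 2‖ε‖/√(1−δ)`. -/
theorem sparse_least_squares_error_bound
    {n m : ℕ} (A : Evec n →L[ℝ] Evec m) (y : Evec n) (ε b : Evec m)
    (k : ℕ) (hb : b = A y + ε) (hcard : spcard y ≤ k) (hk : 2 * k ≤ n)
    (δ : ℝ) (hδ0 : 0 < δ) (hδ1 : δ < 1) (hRIP : RIP A (2 * k) δ)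
    (x : Evec n) (hxc : spcard x ≤ k)
    (hmin : ∀ w : Evec n, spcard w ≤ k → ‖A x - b‖ ^ 2 ≤ ‖A w - b‖ ^ 2) :
    ‖x - y‖ ≤ 2 * ‖ε‖ / Real.sqrt (1 - δ) := by

  have h1 : ‖A x - b‖ ^ 2 ≤ ‖ε‖ ^ 2 := by
    have := hmin y hcard
    have he : A y - b = -ε := by rw [hb]; abel
    rwa [he, norm_neg] at this
  have hcxy : spcard (x - y) ≤ 2 * k := by
    have : spcard (x - y) ≤ spcard x + spcard y := by
      unfold spcard
      have hsub : (Finset.univ.filter (fun i => (x - y) i ≠ 0)) ⊆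
          (Finset.univ.filter (fun i => x i ≠ 0)) ∪ (Finset.univ.filter (fun i => y i ≠ 0)) := by
        intro i hi
        simp only [Finset.mem_filter, Finset.mem_union, Finset.mem_univ, true_and] at *
        by_contra h
        push_neg at h
        exact hi (by simp [h.1, h.2])
      exact le_trans (Finset.card_le_card hsub) (Finset.card_union_le _ _)
    omega
  have h2 := (hRIP (x - y) hcxy).1
  have hAxy : ‖A (x - y)‖ ≤ 2 * ‖ε‖ := by
    have heq : A (x - y) = (A x - b) + ε := by rw [hb]; simp [map_sub]; abel
    have hle : ‖A x - b‖ ≤ ‖ε‖ := by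
      nlinarith [norm_nonneg (A x - b), norm_nonneg ε]
    calc ‖A (x - y)‖ = ‖(A x - b) + ε‖ := by rw [heq]
      _ ≤ ‖A x - b‖ + ‖ε‖ := norm_add_le _ _
      _ ≤ 2 * ‖ε‖ := by linarith
  have hsq : (1 - δ) * ‖x - y‖ ^ 2 ≤ (2 * ‖ε‖) ^ 2 := by
    nlinarith [norm_nonneg (A (x - y))]
  have hsp : (0:ℝ) < Real.sqrt (1 - δ) := Real.sqrt_pos.mpr (by linarith)
  rw [le_div_iff₀ hsp]
  have hnn : 0 ≤ ‖x - y‖ * Real.sqrt (1 - δ) := by positivity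
  nlinarith [Real.sq_sqrt (by linarith : (0:ℝ) ≤ 1 - δ), norm_nonneg (x - y), norm_nonneg ε,
    Real.sqrt_nonneg (1 - δ)]
end
end

section
/- Suppose b = Ay + ε where card(y) ≤ k and 2k ≤ n, A satisfies the RIP of order 2k with constant δ_{2k} ∈ (0,1), and the operator norm satisfies ‖A‖ ≤ 1. If x minimizes ‖Aw − b‖² over all w ∈ ℝⁿ with card(w) ≤ k, and z = (I − AᵀA)x + Aᵀb, then ‖z − x‖ ≤ 3‖ε‖ / √(1−δ_{2k}); in particular, since x̃_{k+1} = 0, the (k+1)-st sorted magnitude of z satisfies z̃_{k+1} ≤ 3‖ε‖ / √(1−δ_{2k}). -/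
open scoped RealInnerProductSpace ENNReal
noncomputable section

lemma abs_apply_le_norm {n : ℕ} (v : Evec n) (i : Fin n) : |v i| ≤ ‖v‖ := by
  rw [EuclideanSpace.norm_eq]
  have h1 : |v i| = Real.sqrt (‖v i‖ ^ 2) := by
    rw [Real.sqrt_sq (norm_nonneg _)]; simp [Real.norm_eq_abs]
  rw [h1]
  apply Real.sqrt_le_sqrt
  exact Finset.single_le_sum (f := fun j => ‖v j‖ ^ 2) (fun j _ => by positivity)
    (Finset.mem_univ i)

/-- If `b = Ay + ε` with `card(y) ≤ k`, `2k ≤ n`, RIP of order `2k`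
holds with constant `δ ∈ (0,1)`, and `‖A‖ ≤ 1`, then any minimizer `x` of `‖Aw − b‖²`
over `card(w) ≤ k` with `z = (I − AᵀA)x + Aᵀb` satisfies `‖z − x‖ ≤ 3‖ε‖/√(1−δ)`; in
particular `z̃_{k+1} ≤ 3‖ε‖/√(1−δ)`. -/
theorem z_vector_error_bound
    {n m : ℕ} (A : Evec n →L[ℝ] Evec m) (y : Evec n) (ε b : Evec m)
    (k : ℕ) (hb : b = A y + ε) (hcard : spcard y ≤ k) (hk : 2 * k ≤ n)
    (δ : ℝ) (hδ0 : 0 < δ) (hδ1 : δ < 1) (hRIP : RIP A (2 * k) δ)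
    (hA : ‖A‖ ≤ 1)
    (x : Evec n) (hxc : spcard x ≤ k)
    (hmin : ∀ w : Evec n, spcard w ≤ k → ‖A x - b‖ ^ 2 ≤ ‖A w - b‖ ^ 2) :
    ‖zvec A b x - x‖ ≤ 3 * ‖ε‖ / Real.sqrt (1 - δ) ∧
    sortedAbs (zvec A b x) (k + 1) ≤ 3 * ‖ε‖ / Real.sqrt (1 - δ) := by
  have h1δ : (0:ℝ) < 1 - δ := by linarith
  have hsq : 0 < Real.sqrt (1 - δ) := Real.sqrt_pos.mpr h1δ
  have hεb : ‖A x - b‖ ≤ ‖ε‖ := by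
    have h := hmin y hcard
    have h2 : ‖A y - b‖ = ‖ε‖ := by rw [hb]; simp
    rw [h2] at h
    nlinarith [norm_nonneg (A x - b), norm_nonneg ε]
  have hz : zvec A b x - x = ContinuousLinearMap.adjoint A (b - A x) := by
    simp only [zvec, map_sub]; abel
  have hrhs : ‖ε‖ ≤ 3 * ‖ε‖ / Real.sqrt (1 - δ) := by
    rw [le_div_iff₀ hsq]
    have : Real.sqrt (1 - δ) ≤ 1 := Real.sqrt_le_one.mpr (by linarith)
    nlinarith [norm_nonneg ε]
  have hmain : ‖zvec A b x - x‖ ≤ 3 * ‖ε‖ / Real.sqrt (1 - δ) := by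
    have h1 : ‖zvec A b x - x‖ ≤ ‖b - A x‖ := by
      rw [hz]
      calc ‖ContinuousLinearMap.adjoint A (b - A x)‖
          ≤ ‖ContinuousLinearMap.adjoint A‖ * ‖b - A x‖ :=
            (ContinuousLinearMap.adjoint A).le_opNorm _
        _ ≤ 1 * ‖b - A x‖ := by
            apply mul_le_mul_of_nonneg_right _ (norm_nonneg _)
            rw [show ‖ContinuousLinearMap.adjoint A‖ = ‖A‖ from
              LinearIsometryEquiv.norm_map _ A]
            exact hA
        _ = ‖b - A x‖ := one_mul _
    have h2 : ‖b - A x‖ = ‖A x - b‖ := norm_sub_rev _ _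
    linarith
  refine ⟨hmain, ?_⟩
  set z := zvec A b x with hzdef
  by_cases hn : k + 1 ≤ n
  · set σ := Tuple.sort (fun i : Fin n => -|z i|) with hσ
    have hmono : Monotone ((fun i : Fin n => -|z i|) ∘ σ) := Tuple.monotone_sort _
    obtain ⟨j, hjk, hxj⟩ : ∃ j : Fin n, (j : ℕ) ≤ k ∧ x (σ j) = 0 := by
      by_contra hcon
      push_neg at hcon
      have hle : (Finset.univ : Finset (Fin (k+1))).card ≤
          (Finset.univ.filter (fun i : Fin n => x i ≠ 0)).card := by
        apply Finset.card_le_card_of_injOn (fun j => σ (Fin.castLE hn j))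
        · intro j _
          refine Finset.mem_filter.mpr ⟨Finset.mem_univ _, ?_⟩
          exact hcon (Fin.castLE hn j) (by simpa using Nat.lt_succ_iff.mp j.isLt)
        · intro a _ b _ hab
          exact Fin.castLE_injective hn (σ.injective hab)
      simp only [Finset.card_univ, Fintype.card_fin] at hle
      have : spcard x = (Finset.univ.filter (fun i : Fin n => x i ≠ 0)).card := rfl
      omega
    have hkn : k < n := by omega
    have hsa : sortedAbs z (k+1) = |z (σ ⟨k, hkn⟩)| := by
      rw [sortedAbs, dif_pos ⟨Nat.le_add_left 1 k, hn⟩]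
      congr 1
    rw [hsa]
    have hmle : |z (σ ⟨k, hkn⟩)| ≤ |z (σ j)| := by
      have := hmono (a := j) (b := ⟨k, hkn⟩) (by exact hjk)
      simpa using this
    have hco : |z (σ j)| ≤ ‖z - x‖ := by
      have : z (σ j) = (z - x) (σ j) := by
        simp [PiLp.sub_apply, hxj]
      rw [this]
      exact abs_apply_le_norm _ _
    linarith
  · rw [sortedAbs, dif_neg (by omega)]
    positivity
end
end

section
/- Let μ > 0 and R_μ(x) = Σ_{i=1}^n (μ − max(√μ − |x_i|, 0)²), the quadratic envelope of μ·card(·). Let A be a real m×n matrix and b ∈ ℝᵐ. If x₀ ∈ ℝⁿ satisfies the normal equations Aᵀ(Ax₀ − b) = 0 (i.e. x₀ is a least-squares solution of Ax = b) and |x₀ᵢ| > √μ for every i ∈ {1,…,n}, then x₀ is a local minimizer of the function x ↦ R_μ(x) + ‖Ax − b‖². -/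
open scoped RealInnerProductSpace ENNReal
noncomputable section

/-- For `R_μ(x) = Σ_i (μ − max(√μ − |x_i|, 0)²)` with `μ > 0`, any
least-squares solution `x₀` of `Ax = b` (i.e. `Aᵀ(Ax₀ − b) = 0`) all of whose entries
satisfy `|x₀ᵢ| > √μ` is a local minimizer of `x ↦ R_μ(x) + ‖Ax − b‖²`. -/
theorem separable_regularizer_dense_local_minimum
    {n m : ℕ} (μ : ℝ) (hμ : 0 < μ)
    (A : Evec n →L[ℝ] Evec m) (b : Evec m) (x₀ : Evec n)
    (hls : ContinuousLinearMap.adjoint A (A x₀ - b) = 0)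
    (hbig : ∀ i : Fin n, Real.sqrt μ < |x₀ i|) :
    IsLocalMin
      (fun x : Evec n =>
        (∑ i : Fin n, (μ - max (Real.sqrt μ - |x i|) 0 ^ 2)) + ‖A x - b‖ ^ 2) x₀ := by
  have hA : ∀ x : Evec n, ‖A x₀ - b‖ ^ 2 ≤ ‖A x - b‖ ^ 2 := by
    intro x
    have key : A x - b = A (x - x₀) + (A x₀ - b) := by
      rw [map_sub]; abel
    have hinner : ⟪A (x - x₀), A x₀ - b⟫ = 0 := by
      rw [← ContinuousLinearMap.adjoint_inner_right, hls, inner_zero_right]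
    have hexp := norm_add_sq_real (A (x - x₀)) (A x₀ - b)
    rw [key]
    nlinarith [sq_nonneg ‖A (x - x₀)‖]
  have hmem : ∀ᶠ x in nhds x₀, ∀ i : Fin n, Real.sqrt μ ≤ |x i| := by
    rw [Filter.eventually_all]
    intro i
    have hc : ContinuousAt (fun x : Evec n => |x i|) x₀ :=
      ((EuclideanSpace.proj (𝕜 := ℝ) i).continuous.continuousAt).abs
    have := ContinuousAt.eventually_lt continuousAt_const hc (hbig i)
    filter_upwards [this] with x hx
    exact le_of_lt hx
  filter_upwards [hmem] with x hx
  have hsum : ∀ y : Evec n, (∀ i : Fin n, Real.sqrt μ ≤ |y i|) →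
      (∑ i : Fin n, (μ - max (Real.sqrt μ - |y i|) 0 ^ 2)) = n * μ := by
    intro y hy
    have : ∀ i : Fin n, (μ - max (Real.sqrt μ - |y i|) 0 ^ 2) = μ := by
      intro i
      have : max (Real.sqrt μ - |y i|) 0 = 0 := max_eq_right (by linarith [hy i])
      rw [this]; ring
    rw [Finset.sum_congr rfl (fun i _ => this i)]
    simp [Finset.sum_const]
  show _ + _ ≤ _ + _
  rw [hsum x hx, hsum x₀ (fun i => le_of_lt (hbig i))]
  have := hA x
  linarith
end
end
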